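/- arXiv:1808.06655 — 7 statements merged into one kernel-verified Lean document; each statement's English description precedes it below -/
import Mathlib

section
/- There exists an absolute constant C > 0 such that the following holds. Let F be any field, let n ≥ 2, and let f, g, h be polynomials in F[x_1, ..., x_n] with f = g·h and f ≠ 0. If every variable has individual degree at most d (with d ≥ 1) in g, then the sparsity of g satisfies mon(g) ≤ mon(f)^(C·d²·log n). In particular, if f has sparsity s and individual degrees at most d, every factor of f has sparsity at most s^(C·d²·log n). -/
open Finset

namespace SparseFactorProof

noncomputable section

variable {n : ℕ}

/-- Embedding of exponent vectors into `ℝ^n`. -/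
def emb (e : Fin n →₀ ℕ) : Fin n → ℝ := fun i => (e i : ℝ)

lemma emb_add (a b : Fin n →₀ ℕ) : emb (a + b) = emb a + emb b := by
  funext i; simp [emb]

lemma emb_inj : Function.Injective (emb (n := n)) := by
  intro a b hab
  ext i
  have h := congrFun hab i
  simp only [emb] at h
  exact_mod_cast h

lemma exposed_mem_support_mul {F : Type} [Field F] {g h : MvPolynomial (Fin n) F}
    (hh : h ≠ 0) (ℓ : (Fin n → ℝ) →L[ℝ] ℝ) {a : Fin n →₀ ℕ}
    (ha : a ∈ g.support)
    (hstrict : ∀ a' ∈ g.support, a' ≠ a → ℓ (emb a') < ℓ (emb a)) :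
    ∃ b ∈ h.support, (a + b ∈ (g * h).support ∧ ∀ b' ∈ h.support, ℓ (emb b') ≤ ℓ (emb b)) := by
  classical
  obtain ⟨b, hb, hbmax⟩ := h.support.exists_max_image (fun b => ℓ (emb b)) (by
    rwa [Finset.nonempty_iff_ne_empty, Ne, MvPolynomial.support_eq_empty])
  refine ⟨b, hb, ?_, hbmax⟩
  rw [MvPolynomial.mem_support_iff, MvPolynomial.coeff_mul]
  have hkey : ∑ x ∈ Finset.HasAntidiagonal.antidiagonal (a + b), MvPolynomial.coeff x.1 g * MvPolynomial.coeff x.2 h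
      = MvPolynomial.coeff a g * MvPolynomial.coeff b h := by
    apply Finset.sum_eq_single_of_mem (a, b) (Finset.HasAntidiagonal.mem_antidiagonal.2 rfl)
    rintro ⟨x, y⟩ hxy hne
    rw [Finset.HasAntidiagonal.mem_antidiagonal] at hxy
    by_cases hx : MvPolynomial.coeff x g = 0
    · exact mul_eq_zero_of_left hx _
    by_cases hy : MvPolynomial.coeff y h = 0
    · exact mul_eq_zero_of_right _ hy
    exfalso
    have hxs : x ∈ g.support := MvPolynomial.mem_support_iff.2 hx
    have hys : y ∈ h.support := MvPolynomial.mem_support_iff.2 hy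
    have hsum : ℓ (emb x) + ℓ (emb y) = ℓ (emb a) + ℓ (emb b) := by
      have h1 : ℓ (emb (x + y)) = ℓ (emb (a + b)) := by rw [hxy]
      simpa [emb_add, map_add] using h1
    have hxa : x = a := by
      by_contra hxa
      have h1 := hstrict x hxs hxa
      have h2 := hbmax y hys
      linarith
    subst hxa
    have hyb : y = b := by
      have := hxy
      exact add_left_cancel this
    exact hne (by rw [hyb])
  rw [hkey]
  exact mul_ne_zero (MvPolynomial.mem_support_iff.1 ha) (MvPolynomial.mem_support_iff.1 hb)

lemma exists_exposing_functional {A : Set (Fin n → ℝ)} (hA : A.Finite) {v : Fin n → ℝ}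
    (hv : v ∈ (convexHull ℝ A).extremePoints ℝ) :
    ∃ ℓ : (Fin n → ℝ) →L[ℝ] ℝ, ∀ a ∈ A, a ≠ v → ℓ a < ℓ v := by
  have hvnot : v ∉ convexHull ℝ (A \ {v}) := by
    have h1 := (convex_convexHull ℝ A).mem_extremePoints_iff_mem_diff_convexHull_diff.1 hv
    intro hcon
    exact h1.2 (convexHull_mono (Set.diff_subset_diff_left (subset_convexHull ℝ A)) hcon)
  obtain ⟨ℓ, u, hu, huv⟩ := geometric_hahn_banach_closed_point
    (convex_convexHull ℝ _) ((hA.subset Set.diff_subset).isClosed_convexHull ℝ) hvnot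
  exact ⟨ℓ, fun a haA hav => (hu a (subset_convexHull ℝ _ ⟨haA, hav⟩)).trans huv⟩

lemma subset_convexHull_extremePoints {A : Set (Fin n → ℝ)} (hA : A.Finite) :
    A ⊆ convexHull ℝ ((convexHull ℝ A).extremePoints ℝ) := by
  have hE : ((convexHull ℝ A).extremePoints ℝ).Finite := hA.subset extremePoints_convexHull_subset
  have h1 : closure (convexHull ℝ ((convexHull ℝ A).extremePoints ℝ)) = convexHull ℝ A :=
    closure_convexHull_extremePoints (hA.isCompact_convexHull ℝ) (convex_convexHull ℝ A)
  have h2 : convexHull ℝ ((convexHull ℝ A).extremePoints ℝ) = convexHull ℝ A := by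
    rw [← (hE.isClosed_convexHull ℝ).closure_eq]
    exact h1
  intro x hx
  rw [h2]
  exact subset_convexHull ℝ A hx

lemma card_extremePoints_le_support_mul {F : Type} [Field F] {g h : MvPolynomial (Fin n) F}
    (hh : h ≠ 0) (EF : Finset (Fin n → ℝ))
    (hEF : (EF : Set (Fin n → ℝ)) ⊆ (convexHull ℝ (emb '' ↑g.support)).extremePoints ℝ) :
    EF.card ≤ (g * h).support.card := by
  classical
  have key : ∀ v ∈ EF, ∃ a b : (Fin n →₀ ℕ), a ∈ g.support ∧ b ∈ h.support ∧ emb a = v ∧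
      (a + b) ∈ (g * h).support ∧
      ∃ ℓ : (Fin n → ℝ) →L[ℝ] ℝ, (∀ a' ∈ g.support, a' ≠ a → ℓ (emb a') < ℓ (emb a)) ∧
        (∀ b' ∈ h.support, ℓ (emb b') ≤ ℓ (emb b)) := by
    intro v hv
    have hvE := hEF hv
    have hvA : v ∈ emb '' ↑g.support := extremePoints_convexHull_subset hvE
    obtain ⟨a, haS, hav⟩ := hvA
    obtain ⟨ℓ, hℓ⟩ := exists_exposing_functional (g.support.finite_toSet.image emb) hvE
    have hstrict : ∀ a' ∈ g.support, a' ≠ a → ℓ (emb a') < ℓ (emb a) := by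
      intro a' ha' hne
      rw [hav]
      exact hℓ (emb a') ⟨a', ha', rfl⟩ (fun hEq => hne (emb_inj (hEq.trans hav.symm)))
    obtain ⟨b, hbS, hmem, hbmax⟩ := exposed_mem_support_mul hh ℓ haS hstrict
    exact ⟨a, b, haS, hbS, hav, hmem, ℓ, hstrict, hbmax⟩
  choose a b haS hbS hemb hmem ℓsel hstrict hbmax using key
  have hinj : ∀ v ∈ EF, ∀ v' ∈ EF,
      (∀ hv hv', a v hv + b v hv = a v' hv' + b v' hv') → v = v' := by
    intro v hv v' hv' heq
    by_contra hne
    have heq' := heq hv hv'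
    have hane : a v' hv' ≠ a v hv := by
      intro hEq
      exact hne ((hemb v hv).symm.trans ((congrArg emb hEq).symm.trans (hemb v' hv')))
    have h1 : (ℓsel v hv) (emb (a v' hv')) < (ℓsel v hv) (emb (a v hv)) :=
      hstrict v hv _ (haS v' hv') hane
    have h2 : (ℓsel v hv) (emb (b v' hv')) ≤ (ℓsel v hv) (emb (b v hv)) :=
      hbmax v hv _ (hbS v' hv')
    have h3 : (ℓsel v hv) (emb (a v' hv')) + (ℓsel v hv) (emb (b v' hv'))
        = (ℓsel v hv) (emb (a v hv)) + (ℓsel v hv) (emb (b v hv)) := by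
      have h4 : (ℓsel v hv) (emb (a v' hv' + b v' hv')) = (ℓsel v hv) (emb (a v hv + b v hv)) := by
        rw [heq']
      simpa [emb_add, map_add] using h4
    linarith
  apply Finset.card_le_card_of_injOn
    (fun v => if hv : v ∈ EF then a v hv + b v hv else 0)
  · intro v hv
    simp only [dif_pos hv]
    simpa [dif_pos (show v ∈ EF from hv)] using hmem v hv
  · intro v hv v' hv' heq
    have hv1 : v ∈ EF := hv
    have hv2 : v' ∈ EF := hv'
    simp only [dif_pos hv1, dif_pos hv2] at heq
    exact hinj v hv1 v' hv2 (fun _ _ => heq)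

lemma exp_le_one_add_add_sq {x : ℝ} (hx : |x| ≤ 1) : Real.exp x ≤ 1 + x + x ^ 2 := by
  have h := Real.exp_bound hx (n := 2) (by norm_num)
  have hsum : ∑ m ∈ Finset.range 2, x ^ m / m.factorial = 1 + x := by
    norm_num [Finset.sum_range_succ]
  rw [hsum] at h
  have h2 := (abs_le.1 h).2
  have h3 : |x| ^ 2 = x ^ 2 := sq_abs x
  have h4 : ((Nat.succ 2 : ℝ) / ((2:ℕ).factorial * 2)) = 3 / 4 := by
    norm_num [Nat.factorial]
  nlinarith [sq_nonneg x]

lemma sum_prod_pow {α : Type*} [Fintype α] (w : α → ℝ) (k : ℕ) :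
    ∑ u : Fin k → α, ∏ t, w (u t) = (∑ a, w a) ^ k := by
  classical
  rw [← Fintype.piFinset_univ]
  rw [Finset.sum_prod_piFinset Finset.univ (fun _ a => w a)]
  simp [Finset.prod_const]

lemma sum_biUnion_le_nonneg {β γ : Type*} [DecidableEq β] [DecidableEq γ] (s : Finset β)
    (t : β → Finset γ) (f : γ → ℝ) (hf : ∀ x, 0 ≤ f x) :
    ∑ x ∈ s.biUnion t, f x ≤ ∑ b ∈ s, ∑ x ∈ t b, f x := by
  classical
  induction s using Finset.induction_on with
  | empty => simp
  | @insert a s hb ih =>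
    rw [Finset.biUnion_insert, Finset.sum_insert hb]
    have h2 := Finset.sum_union_inter (s₁ := t a) (s₂ := s.biUnion t) (f := f)
    have h3 : 0 ≤ ∑ x ∈ t a ∩ s.biUnion t, f x := Finset.sum_nonneg fun x _ => hf x
    linarith

lemma chernoff_bound {α : Type*} [Fintype α] (d k : ℕ) (hd : 1 ≤ d) (w y : α → ℝ)
    (hw0 : ∀ a, 0 ≤ w a) (hw1 : ∑ a, w a = 1) (hy : ∀ a, |y a| ≤ d)
    (hmean : ∑ a, w a * y a = 0) :
    ∑ u ∈ Finset.univ.filter (fun u : Fin k → α => (k : ℝ) / 2 ≤ ∑ t, y (u t)),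
      ∏ t, w (u t) ≤ Real.exp (-(k : ℝ) / (16 * (d : ℝ) ^ 2)) := by
  classical
  have hd0 : (1:ℝ) ≤ (d:ℝ) := by exact_mod_cast hd
  set τ : ℝ := 1 / (4 * (d:ℝ)^2) with hτdef
  have hτ0 : 0 < τ := by positivity
  have hterm : ∀ u : Fin k → α, ∏ t, (w (u t) * Real.exp (τ * y (u t)))
      = (∏ t, w (u t)) * Real.exp (τ * ∑ t, y (u t)) := by
    intro u
    rw [Finset.prod_mul_distrib, ← Real.exp_sum]
    congr 1
    rw [Finset.mul_sum]
  have step1 : ∑ u ∈ Finset.univ.filter (fun u : Fin k → α => (k : ℝ) / 2 ≤ ∑ t, y (u t)),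
      ∏ t, w (u t) ≤ Real.exp (-(τ * k / 2))
        * ∑ u : Fin k → α, ∏ t, (w (u t) * Real.exp (τ * y (u t))) := by
    rw [Finset.mul_sum]
    calc ∑ u ∈ Finset.univ.filter (fun u : Fin k → α => (k : ℝ) / 2 ≤ ∑ t, y (u t)), ∏ t, w (u t)
        ≤ ∑ u ∈ Finset.univ.filter (fun u : Fin k → α => (k : ℝ) / 2 ≤ ∑ t, y (u t)),
            Real.exp (-(τ * k / 2)) * ((∏ t, w (u t)) * Real.exp (τ * ∑ t, y (u t))) := by
          apply Finset.sum_le_sum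
          intro u hu
          rw [Finset.mem_filter] at hu
          have h5 : (1:ℝ) ≤ Real.exp (-(τ * k / 2)) * Real.exp (τ * ∑ t, y (u t)) := by
            rw [← Real.exp_add, ← Real.exp_zero]
            apply Real.exp_le_exp.2
            have h6 := hu.2
            nlinarith
          calc ∏ t, w (u t) = (∏ t, w (u t)) * 1 := by ring
            _ ≤ (∏ t, w (u t)) * (Real.exp (-(τ * k / 2)) * Real.exp (τ * ∑ t, y (u t))) :=
                mul_le_mul_of_nonneg_left h5 (Finset.prod_nonneg fun t _ => hw0 _)
            _ = Real.exp (-(τ * k / 2)) * ((∏ t, w (u t)) * Real.exp (τ * ∑ t, y (u t))) := by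
                ring
      _ ≤ ∑ u : Fin k → α,
            Real.exp (-(τ * k / 2)) * ((∏ t, w (u t)) * Real.exp (τ * ∑ t, y (u t))) := by
          apply Finset.sum_le_sum_of_subset_of_nonneg (Finset.filter_subset _ _)
          intro u _ _
          have h7 : (0:ℝ) ≤ ∏ t, w (u t) := Finset.prod_nonneg fun t _ => hw0 (u t)
          positivity
      _ = ∑ u : Fin k → α, Real.exp (-(τ * k / 2)) * ∏ t, (w (u t) * Real.exp (τ * y (u t))) := by
          apply Finset.sum_congr rfl
          intro u _
          rw [hterm]
  have step2 : ∑ u : Fin k → α, ∏ t, (w (u t) * Real.exp (τ * y (u t)))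
      = (∑ a, w a * Real.exp (τ * y a)) ^ k :=
    sum_prod_pow (fun a => w a * Real.exp (τ * y a)) k
  have hM0 : (0:ℝ) ≤ ∑ a, w a * Real.exp (τ * y a) :=
    Finset.sum_nonneg fun a _ => mul_nonneg (hw0 a) (Real.exp_pos _).le
  have step3 : ∑ a, w a * Real.exp (τ * y a) ≤ Real.exp (τ^2 * (d:ℝ)^2) := by
    have habs : ∀ a, |τ * y a| ≤ 1 := by
      intro a
      rw [abs_mul, abs_of_pos hτ0]
      calc τ * |y a| ≤ τ * d := by nlinarith [hy a, abs_nonneg (y a)]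
        _ ≤ 1 := by
          rw [hτdef, div_mul_eq_mul_div, one_mul, div_le_one (by positivity)]
          nlinarith
    calc ∑ a, w a * Real.exp (τ * y a) ≤ ∑ a, w a * (1 + τ * y a + (τ * y a)^2) :=
          Finset.sum_le_sum fun a _ =>
            mul_le_mul_of_nonneg_left (exp_le_one_add_add_sq (habs a)) (hw0 a)
      _ = (∑ a, w a) + τ * (∑ a, w a * y a) + τ^2 * (∑ a, w a * (y a)^2) := by
          rw [Finset.mul_sum, Finset.mul_sum, ← Finset.sum_add_distrib, ← Finset.sum_add_distrib]
          apply Finset.sum_congr rfl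
          intro a _
          ring
      _ = 1 + τ^2 * (∑ a, w a * (y a)^2) := by rw [hw1, hmean]; ring
      _ ≤ 1 + τ^2 * (d:ℝ)^2 := by
          have h7 : (∑ a, w a * (y a)^2) ≤ ∑ a, w a * (d:ℝ)^2 := by
            apply Finset.sum_le_sum
            intro a _
            have h8 : (y a)^2 ≤ (d:ℝ)^2 := by nlinarith [sq_abs (y a), hy a, abs_nonneg (y a)]
            exact mul_le_mul_of_nonneg_left h8 (hw0 a)
          rw [← Finset.sum_mul, hw1, one_mul] at h7
          nlinarith
      _ ≤ Real.exp (τ^2 * (d:ℝ)^2) := by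
          have h9 := Real.add_one_le_exp (τ^2 * (d:ℝ)^2)
          linarith
  have hdne : (d:ℝ) ≠ 0 := by positivity
  calc ∑ u ∈ Finset.univ.filter (fun u : Fin k → α => (k : ℝ) / 2 ≤ ∑ t, y (u t)), ∏ t, w (u t)
      ≤ Real.exp (-(τ * k / 2)) * (∑ a, w a * Real.exp (τ * y a)) ^ k := by
        rw [← step2]; exact step1
    _ ≤ Real.exp (-(τ * k / 2)) * (Real.exp (τ^2 * (d:ℝ)^2)) ^ k :=
        mul_le_mul_of_nonneg_left (pow_le_pow_left₀ hM0 step3 k) (Real.exp_pos _).le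
    _ = Real.exp (-(τ * k / 2) + k * (τ^2 * (d:ℝ)^2)) := by
        rw [← Real.exp_nat_mul, ← Real.exp_add]
    _ = Real.exp (-(k : ℝ) / (16 * (d : ℝ) ^ 2)) := by
        congr 1
        rw [hτdef]
        field_simp
        ring

lemma exists_good_tuple {d k : ℕ} (hd : 1 ≤ d) (hn : 1 ≤ n)
    {V : Finset (Fin n → ℝ)} (hV : ∀ v ∈ V, ∀ j, (0:ℝ) ≤ v j ∧ v j ≤ d)
    {p : Fin n → ℝ} (hp : p ∈ convexHull ℝ (V : Set (Fin n → ℝ)))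
    (hk : 16 * (d:ℝ)^2 * Real.log (2*n) < k) :
    ∃ u : Fin k → {x // x ∈ V}, ∀ j : Fin n,
      |(∑ t, ((u t : Fin n → ℝ)) j) - k * p j| < (k:ℝ)/2 := by
  classical
  have hd0 : (1:ℝ) ≤ (d:ℝ) := by exact_mod_cast hd
  have hn0 : (1:ℝ) ≤ (n:ℝ) := by exact_mod_cast hn
  rw [Finset.convexHull_eq] at hp
  obtain ⟨w, hw0, hw1, hwp⟩ := hp
  rw [Finset.centerMass_eq_of_sum_1 _ _ hw1] at hwp
  have hpj_eq : ∀ j, p j = ∑ y ∈ V, w y * y j := by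
    intro j
    rw [← hwp, Finset.sum_apply]
    apply Finset.sum_congr rfl
    intro y _
    simp
  have hpj : ∀ j, (0:ℝ) ≤ p j ∧ p j ≤ d := by
    intro j
    constructor
    · rw [hpj_eq j]
      exact Finset.sum_nonneg fun y hy => mul_nonneg (hw0 y hy) (hV y hy j).1
    · rw [hpj_eq j]
      calc ∑ y ∈ V, w y * y j ≤ ∑ y ∈ V, w y * d :=
            Finset.sum_le_sum fun y hy =>
              mul_le_mul_of_nonneg_left (hV y hy j).2 (hw0 y hy)
        _ = d := by rw [← Finset.sum_mul, hw1, one_mul]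
  set α := {x // x ∈ V}
  have hw1' : ∑ a : α, w ↑a = 1 := by rw [Finset.sum_coe_sort V w]; exact hw1
  have hw0' : ∀ a : α, 0 ≤ w ↑a := fun a => hw0 _ a.2
  have hyabs : ∀ j : Fin n, ∀ a : α, |(↑a : Fin n → ℝ) j - p j| ≤ (d:ℝ) := by
    intro j a
    have h1 := hV ↑a a.2 j
    have h2 := hpj j
    rw [abs_le]
    constructor <;> linarith [h1.1, h1.2, h2.1, h2.2]
  have hymean : ∀ j : Fin n, ∑ a : α, w ↑a * ((↑a : Fin n → ℝ) j - p j) = 0 := by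
    intro j
    have e1 : ∑ a : α, w ↑a * ((↑a : Fin n → ℝ) j) = p j := by
      rw [hpj_eq j, ← Finset.sum_coe_sort V (fun y => w y * y j)]
    have e2 : ∑ a : α, w ↑a * p j = p j := by
      rw [← Finset.sum_mul, hw1', one_mul]
    calc ∑ a : α, w ↑a * ((↑a : Fin n → ℝ) j - p j)
        = (∑ a : α, w ↑a * ((↑a : Fin n → ℝ) j)) - ∑ a : α, w ↑a * p j := by
          rw [← Finset.sum_sub_distrib]
          apply Finset.sum_congr rfl
          intro a _
          ring
      _ = 0 := by rw [e1, e2, sub_self]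
  have hsum_eq : ∀ u : Fin k → α, ∀ j : Fin n,
      ∑ t, ((↑(u t) : Fin n → ℝ) j - p j) = (∑ t, (↑(u t) : Fin n → ℝ) j) - k * p j := by
    intro u j
    rw [Finset.sum_sub_distrib, Finset.sum_const, Finset.card_univ, Fintype.card_fin,
      nsmul_eq_mul]
  by_contra hno
  push_neg at hno
  set y2 : Fin n × Bool → α → ℝ := fun jb a =>
    if jb.2 then (↑a : Fin n → ℝ) jb.1 - p jb.1
    else -((↑a : Fin n → ℝ) jb.1 - p jb.1) with hy2
  set tset : Fin n × Bool → Finset (Fin k → α) := fun jb =>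
    Finset.univ.filter (fun u : Fin k → α => (k : ℝ) / 2 ≤ ∑ t, y2 jb (u t)) with htset
  have hcover : (Finset.univ : Finset (Fin k → α))
      ⊆ (Finset.univ : Finset (Fin n × Bool)).biUnion tset := by
    intro u _
    obtain ⟨j, hj⟩ := hno u
    rw [Finset.mem_biUnion]
    have h1 : (k:ℝ)/2 ≤ |(∑ t, (↑(u t) : Fin n → ℝ) j) - k * p j| := hj
    rcases le_abs.1 h1 with h2 | h2
    · refine ⟨(j, true), Finset.mem_univ _, ?_⟩
      rw [htset]
      simp only [Finset.mem_filter, Finset.mem_univ, true_and]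
      have e : ∑ t, y2 (j, true) (u t) = (∑ t, (↑(u t) : Fin n → ℝ) j) - k * p j := by
        simp only [hy2, if_true]
        exact hsum_eq u j
      rw [e]
      exact h2
    · refine ⟨(j, false), Finset.mem_univ _, ?_⟩
      rw [htset]
      simp only [Finset.mem_filter, Finset.mem_univ, true_and]
      have e : ∑ t, y2 (j, false) (u t)
          = -((∑ t, (↑(u t) : Fin n → ℝ) j) - k * p j) := by
        simp only [hy2, Bool.false_eq_true, if_false]
        rw [Finset.sum_neg_distrib, hsum_eq u j]
      rw [e]
      exact h2
  have hW0 : ∀ u : Fin k → α, 0 ≤ ∏ t, w ↑(u t) := fun u =>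
    Finset.prod_nonneg fun t _ => hw0' (u t)
  have htot : ∑ u : Fin k → α, ∏ t, w ↑(u t) = 1 := by
    rw [sum_prod_pow (fun a : α => w ↑a) k, hw1', one_pow]
  have hbound : ∀ jb : Fin n × Bool,
      ∑ u ∈ tset jb, ∏ t, w ↑(u t) ≤ Real.exp (-(k : ℝ) / (16 * (d:ℝ)^2)) := by
    rintro ⟨j, b⟩
    apply chernoff_bound d k hd (fun a : α => w ↑a) (y2 (j, b)) hw0' hw1'
    · intro a
      cases b
      · simp only [hy2, Bool.false_eq_true, if_false, abs_neg]
        exact hyabs j a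
      · simp only [hy2, if_true]
        exact hyabs j a
    · cases b
      · simp only [hy2, Bool.false_eq_true, if_false, mul_neg]
        rw [Finset.sum_neg_distrib, hymean j, neg_zero]
      · simp only [hy2, if_true]
        exact hymean j
  have hεlt : Real.exp (-(k:ℝ)/(16*(d:ℝ)^2)) < 1/(2*(n:ℝ)) := by
    have hlog : Real.log (2*(n:ℝ)) < (k:ℝ)/(16*(d:ℝ)^2) := by
      rw [lt_div_iff₀ (by positivity)]
      linarith [hk]
    have h3 : -(k:ℝ)/(16*(d:ℝ)^2) < -Real.log (2*(n:ℝ)) := by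
      rw [neg_div]
      linarith
    calc Real.exp (-(k:ℝ)/(16*(d:ℝ)^2)) < Real.exp (-Real.log (2*(n:ℝ))) :=
          Real.exp_lt_exp.2 h3
      _ = 1/(2*(n:ℝ)) := by
          rw [Real.exp_neg, Real.exp_log (by positivity), one_div]
  have h1 : (1:ℝ) ≤ ∑ jb : Fin n × Bool, ∑ u ∈ tset jb, ∏ t, w ↑(u t) := by
    have heq : (Finset.univ : Finset (Fin n × Bool)).biUnion tset = Finset.univ :=
      Finset.Subset.antisymm (Finset.subset_univ _) hcover
    calc (1:ℝ) = ∑ u : Fin k → α, ∏ t, w ↑(u t) := htot.symm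
      _ = ∑ u ∈ (Finset.univ : Finset (Fin n × Bool)).biUnion tset, ∏ t, w ↑(u t) := by
          rw [heq]
      _ ≤ ∑ jb : Fin n × Bool, ∑ u ∈ tset jb, ∏ t, w ↑(u t) :=
          sum_biUnion_le_nonneg _ _ _ hW0
  have h2 : ∑ jb : Fin n × Bool, ∑ u ∈ tset jb, ∏ t, w ↑(u t)
      ≤ (Fintype.card (Fin n × Bool)) • Real.exp (-(k : ℝ) / (16 * (d:ℝ)^2)) := by
    rw [← Finset.card_univ]
    exact Finset.sum_le_card_nsmul _ _ _ (fun jb _ => hbound jb)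
  have h3 : ((Fintype.card (Fin n × Bool)) : ℝ) = 2*(n:ℝ) := by
    simp [Fintype.card_prod]
    ring
  rw [nsmul_eq_mul, h3] at h2
  have h4 : 2*(n:ℝ) * Real.exp (-(k : ℝ) / (16 * (d:ℝ)^2)) < 2*(n:ℝ) * (1/(2*(n:ℝ))) := by
    apply mul_lt_mul_of_pos_left hεlt (by positivity)
  have h5 : 2*(n:ℝ) * (1/(2*(n:ℝ))) = 1 := by
    field_simp
  linarith

lemma nat_eq_of_abs_lt_one {a b : ℕ} (h : |(a:ℝ) - b| < 1) : a = b := by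
  rcases lt_trichotomy a b with h1 | h1 | h1
  · exfalso
    have h2 : (a:ℝ) + 1 ≤ b := by exact_mod_cast Nat.succ_le_of_lt h1
    have h3 := abs_lt.1 h
    linarith
  · exact h1
  · exfalso
    have h2 : (b:ℝ) + 1 ≤ a := by exact_mod_cast Nat.succ_le_of_lt h1
    have h3 := abs_lt.1 h
    linarith

lemma card_le_pow_of_subset_hull {d k : ℕ} (hd : 1 ≤ d) (hn : 1 ≤ n)
    {V : Finset (Fin n → ℝ)} (hV : ∀ v ∈ V, ∀ j, (0:ℝ) ≤ v j ∧ v j ≤ d)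
    (hk : 16 * (d:ℝ)^2 * Real.log (2*n) < k)
    {T : Finset (Fin n →₀ ℕ)} (hT : ∀ e ∈ T, emb e ∈ convexHull ℝ (V : Set (Fin n → ℝ))) :
    T.card ≤ V.card ^ k := by
  classical
  have hn0 : (1:ℝ) ≤ (n:ℝ) := by exact_mod_cast hn
  have hlogpos : 0 < Real.log (2*(n:ℝ)) := Real.log_pos (by linarith)
  have hd0 : (1:ℝ) ≤ (d:ℝ) := by exact_mod_cast hd
  have hk0 : (0:ℝ) < (k:ℝ) := by nlinarith
  rcases T.eq_empty_or_nonempty with rfl | hTne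
  · simp
  have hVne : V.Nonempty := by
    obtain ⟨e, he⟩ := hTne
    have h1 := hT e he
    by_contra hVe
    rw [Finset.not_nonempty_iff_eq_empty] at hVe
    rw [hVe] at h1
    simp at h1
  have key : ∀ e ∈ T, ∃ u : Fin k → {x // x ∈ V}, ∀ j : Fin n,
      |(∑ t, ((u t : Fin n → ℝ)) j) - k * emb e j| < (k:ℝ)/2 :=
    fun e he => exists_good_tuple hd hn hV (hT e he) hk
  choose usel husel using key
  haveI : Nonempty {x // x ∈ V} := ⟨⟨hVne.choose, hVne.choose_spec⟩⟩
  have h1 : T.card ≤ Fintype.card (Fin k → {x // x ∈ V}) := by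
    rw [← Finset.card_univ]
    apply Finset.card_le_card_of_injOn
      (fun e => if he : e ∈ T then usel e he else Classical.arbitrary _)
    · intro e _
      exact Finset.mem_univ _
    · intro e he e' he' heq
      have he1 : e ∈ T := he
      have he2 : e' ∈ T := he'
      simp only [dif_pos he1, dif_pos he2] at heq
      apply Finsupp.ext
      intro j
      have hu1 := husel e he1 j
      have hu2 := husel e' he2 j
      rw [heq] at hu1
      set S : ℝ := ∑ t, ((usel e' he2 t : Fin n → ℝ)) j with hS
      have h4 : |(k:ℝ) * emb e j - k * emb e' j| < k := by
        have h5 : (k:ℝ) * emb e j - k * emb e' j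
            = (S - k * emb e' j) - (S - k * emb e j) := by ring
        rw [h5, sub_eq_add_neg]
        calc |(S - (k:ℝ) * emb e' j) + -(S - k * emb e j)|
            ≤ |S - (k:ℝ) * emb e' j| + |-(S - (k:ℝ) * emb e j)| := abs_add_le _ _
          _ = |S - (k:ℝ) * emb e' j| + |S - (k:ℝ) * emb e j| := by rw [abs_neg]
          _ < (k:ℝ)/2 + (k:ℝ)/2 := add_lt_add hu2 hu1
          _ = k := by ring
      have h6 : (k:ℝ) * |emb e j - emb e' j| < (k:ℝ) * 1 := by
        have h7 : (k:ℝ) * |emb e j - emb e' j| = |(k:ℝ) * (emb e j - emb e' j)| := by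
          rw [abs_mul, abs_of_pos hk0]
        rw [h7, mul_sub, mul_one]
        exact h4
      have h8 : |(e j : ℝ) - (e' j : ℝ)| < 1 := by
        have := lt_of_mul_lt_mul_left h6 hk0.le
        simpa [emb] using this
      exact nat_eq_of_abs_lt_one h8
  calc T.card ≤ Fintype.card (Fin k → {x // x ∈ V}) := h1
    _ = V.card ^ k := by
        rw [Fintype.card_fun, Fintype.card_coe, Fintype.card_fin]

lemma core {F : Type} [Field F] {d : ℕ} (hn : 2 ≤ n) (hd : 1 ≤ d)
    (g h : MvPolynomial (Fin n) F) (hg : g ≠ 0) (hh : h ≠ 0)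
    (hdeg : ∀ i, g.degreeOf i ≤ d) :
    (g.support.card : ℝ) ≤ ((g * h).support.card : ℝ) ^ (100 * (d:ℝ)^2 * Real.log n) := by
  classical
  have hn1 : 1 ≤ n := le_trans (by norm_num) hn
  have hn0 : (2:ℝ) ≤ (n:ℝ) := by exact_mod_cast hn
  have hd0 : (1:ℝ) ≤ (d:ℝ) := by exact_mod_cast hd
  set A : Set (Fin n → ℝ) := emb '' ↑g.support with hA
  have hAfin : A.Finite := g.support.finite_toSet.image emb
  have hEfin : ((convexHull ℝ A).extremePoints ℝ).Finite :=
    hAfin.subset extremePoints_convexHull_subset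
  set EF := hEfin.toFinset with hEF
  set k := ⌈16 * (d:ℝ)^2 * Real.log (2*(n:ℝ))⌉₊ + 1 with hkdef
  have hlog2n0 : (0:ℝ) ≤ Real.log (2*(n:ℝ)) := Real.log_nonneg (by linarith)
  have hx0 : (0:ℝ) ≤ 16 * (d:ℝ)^2 * Real.log (2*(n:ℝ)) := by positivity
  have hkcast : (k:ℝ) = (⌈16 * (d:ℝ)^2 * Real.log (2*(n:ℝ))⌉₊ : ℝ) + 1 := by
    rw [hkdef]
    push_cast
    ring
  have hklb : 16*(d:ℝ)^2*Real.log (2*(n:ℝ)) < (k:ℝ) := by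
    rw [hkcast]
    have := Nat.le_ceil (16 * (d:ℝ)^2 * Real.log (2*(n:ℝ)))
    linarith
  have hVcoord : ∀ v ∈ EF, ∀ j, (0:ℝ) ≤ v j ∧ v j ≤ d := by
    intro v hv j
    have hvE : v ∈ (convexHull ℝ A).extremePoints ℝ := hEfin.mem_toFinset.1 hv
    have hvA : v ∈ A := extremePoints_convexHull_subset hvE
    obtain ⟨e, heS, hev⟩ := hvA
    rw [← hev]
    constructor
    · simp [emb]
    · have h1 : e j ≤ d := le_trans (MvPolynomial.monomial_le_degreeOf j heS) (hdeg j)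
      simp only [emb]
      exact_mod_cast h1
  have hThull : ∀ e ∈ g.support, emb e ∈ convexHull ℝ (EF : Set (Fin n → ℝ)) := by
    intro e he
    have h1 : emb e ∈ A := ⟨e, he, rfl⟩
    have h2 := subset_convexHull_extremePoints hAfin h1
    rw [hEF, hEfin.coe_toFinset]
    exact h2
  have h1 : g.support.card ≤ EF.card ^ k :=
    card_le_pow_of_subset_hull hd hn1 hVcoord hklb hThull
  have h2 : EF.card ≤ (g*h).support.card := by
    apply card_extremePoints_le_support_mul hh EF
    rw [hEF, hEfin.coe_toFinset]
  have h3 : g.support.card ≤ (g*h).support.card ^ k :=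
    le_trans h1 (Nat.pow_le_pow_left h2 k)
  have hs1 : (1:ℝ) ≤ ((g*h).support.card : ℝ) := by
    have hne : (g*h) ≠ 0 := mul_ne_zero hg hh
    have hne2 : (g*h).support.Nonempty := by
      rw [Finset.nonempty_iff_ne_empty]
      intro hcon
      exact hne (MvPolynomial.support_eq_empty.1 hcon)
    have := Finset.card_pos.2 hne2
    exact_mod_cast this
  have hkc : (k:ℝ) ≤ 100 * (d:ℝ)^2 * Real.log n := by
    have hceil : (⌈16 * (d:ℝ)^2 * Real.log (2*(n:ℝ))⌉₊ : ℝ)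
        < 16 * (d:ℝ)^2 * Real.log (2*(n:ℝ)) + 1 := Nat.ceil_lt_add_one hx0
    have hlog2n : Real.log (2*(n:ℝ)) = Real.log 2 + Real.log n :=
      Real.log_mul (by norm_num) (by linarith)
    have hl2 : Real.log 2 ≤ Real.log (n:ℝ) := Real.log_le_log (by norm_num) hn0
    have hl2pos : (1/2 : ℝ) ≤ Real.log 2 := by
      have := Real.log_two_gt_d9
      linarith
    have hlogn : (1/2 : ℝ) ≤ Real.log (n:ℝ) := le_trans hl2pos hl2
    have hsplit : Real.log (2*(n:ℝ)) ≤ 2 * Real.log (n:ℝ) := by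
      rw [hlog2n]
      linarith
    have hd2 : (1:ℝ) ≤ (d:ℝ)^2 := by nlinarith
    have hmul : 16*(d:ℝ)^2*Real.log (2*(n:ℝ)) ≤ 32*((d:ℝ)^2*Real.log (n:ℝ)) := by
      have h9 := mul_le_mul_of_nonneg_left hsplit (by positivity : (0:ℝ) ≤ 16*(d:ℝ)^2)
      nlinarith [h9]
    have hhalf : (1/2:ℝ) ≤ (d:ℝ)^2 * Real.log (n:ℝ) := by
      have h10 := mul_le_mul_of_nonneg_left hlogn (by positivity : (0:ℝ) ≤ (d:ℝ)^2)
      nlinarith [h10, hd2]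
    rw [hkcast]
    nlinarith [hceil, hmul, hhalf]
  calc (g.support.card : ℝ) ≤ ((g*h).support.card : ℝ) ^ (k:ℕ) := by exact_mod_cast h3
    _ = ((g*h).support.card : ℝ) ^ ((k:ℕ):ℝ) := (Real.rpow_natCast _ k).symm
    _ ≤ ((g*h).support.card : ℝ) ^ (100*(d:ℝ)^2*Real.log n) :=
        Real.rpow_le_rpow_of_exponent_le hs1 hkc

lemma degreeOf_le_mul {F : Type} [Field F] (g h : MvPolynomial (Fin n) F)
    (hg : g ≠ 0) (hh : h ≠ 0) (i : Fin n) :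
    g.degreeOf i ≤ (g * h).degreeOf i := by
  classical
  set A : Set (Fin n → ℝ) := emb '' ↑g.support with hA
  have hAfin : A.Finite := g.support.finite_toSet.image emb
  have hEfin : ((convexHull ℝ A).extremePoints ℝ).Finite :=
    hAfin.subset extremePoints_convexHull_subset
  set EF := hEfin.toFinset with hEF
  have hgS : g.support.Nonempty := by
    rw [Finset.nonempty_iff_ne_empty]
    intro hcon
    exact hg (MvPolynomial.support_eq_empty.1 hcon)
  have hsub : A ⊆ convexHull ℝ (EF : Set (Fin n → ℝ)) := by
    intro x hx
    have h1 := subset_convexHull_extremePoints hAfin hx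
    rw [hEF, hEfin.coe_toFinset]
    exact h1
  have hEne : EF.Nonempty := by
    obtain ⟨e, he⟩ := hgS
    have h1 : emb e ∈ convexHull ℝ (EF : Set (Fin n → ℝ)) := hsub ⟨e, he, rfl⟩
    rw [Finset.nonempty_iff_ne_empty]
    intro hcon
    rw [hcon] at h1
    simp at h1
  obtain ⟨v, hvEF, hvmax⟩ := EF.exists_max_image (fun x => x i) hEne
  have hvE : v ∈ (convexHull ℝ A).extremePoints ℝ := hEfin.mem_toFinset.1 hvEF
  obtain ⟨a, haS, hav⟩ := extremePoints_convexHull_subset hvE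
  have hAle : ∀ x ∈ convexHull ℝ (EF : Set (Fin n → ℝ)), x i ≤ v i := by
    intro x hx
    have hcvx : Convex ℝ {y : Fin n → ℝ | y i ≤ v i} :=
      convex_halfSpace_le
        (⟨fun _ _ => rfl, fun _ _ => rfl⟩ : IsLinearMap ℝ fun y : Fin n → ℝ => y i) (v i)
    exact convexHull_min (fun z hz => hvmax z hz) hcvx hx
  obtain ⟨e0, he0S, he0⟩ : ∃ e0 ∈ g.support, g.support.sup (fun m => m i) = e0 i :=
    Finset.exists_mem_eq_sup _ hgS _
  have h2 : e0 i ≤ a i := by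
    have h3 : emb e0 i ≤ v i := hAle (emb e0) (hsub ⟨e0, he0S, rfl⟩)
    rw [← hav] at h3
    simp only [emb] at h3
    exact_mod_cast h3
  obtain ⟨ℓ, hℓ⟩ := exists_exposing_functional hAfin hvE
  have hstrict : ∀ a' ∈ g.support, a' ≠ a → ℓ (emb a') < ℓ (emb a) := by
    intro a' ha' hne
    rw [hav]
    exact hℓ (emb a') ⟨a', ha', rfl⟩ (fun hEq => hne (emb_inj (hEq.trans hav.symm)))
  obtain ⟨b, hbS, hmem, hmax⟩ := exposed_mem_support_mul hh ℓ haS hstrict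
  calc g.degreeOf i = g.support.sup (fun m => m i) := MvPolynomial.degreeOf_eq_sup i g
    _ = e0 i := he0
    _ ≤ a i := h2
    _ ≤ (a + b) i := by simp
    _ ≤ (g*h).degreeOf i := MvPolynomial.monomial_le_degreeOf i hmem

end

end SparseFactorProof

/-- **Factor sparsity bound.** There is an absolute constant `C > 0` such that for every
field `F`, every `n ≥ 2`, `d ≥ 1`, and polynomials `f = g * h` in `F[x_1, ..., x_n]` with
`f ≠ 0` and all individual degrees of `g` at most `d`, the sparsity of `g` is at most
`mon(f) ^ (C * d^2 * log n)`.  In particular every factor of an `s`-sparse polynomial of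
individual degrees at most `d` has sparsity at most `s ^ (C * d^2 * log n)`. -/
theorem stmt0 :
    ∃ C : ℝ, 0 < C ∧
      (∀ (F : Type) [Field F] (n d : ℕ), 2 ≤ n → 1 ≤ d →
        ∀ f g h : MvPolynomial (Fin n) F, f = g * h → f ≠ 0 →
          (∀ i : Fin n, g.degreeOf i ≤ d) →
          (g.support.card : ℝ) ≤ (f.support.card : ℝ) ^ (C * (d : ℝ)^2 * Real.log n)) ∧
      (∀ (F : Type) [Field F] (n d : ℕ), 2 ≤ n → 1 ≤ d →
        ∀ f g : MvPolynomial (Fin n) F, f ≠ 0 →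
          (∀ i : Fin n, f.degreeOf i ≤ d) → g ∣ f →
          (g.support.card : ℝ) ≤ (f.support.card : ℝ) ^ (C * (d : ℝ)^2 * Real.log n)) := by
  refine ⟨100, by norm_num, ?_, ?_⟩
  · intro F _ n d hn hd f g h hf hf0 hdeg
    have hg : g ≠ 0 := fun hgz => hf0 (by rw [hf, hgz, zero_mul])
    have hh : h ≠ 0 := fun hhz => hf0 (by rw [hf, hhz, mul_zero])
    rw [hf]
    exact SparseFactorProof.core hn hd g h hg hh hdeg
  · intro F _ n d hn hd f g hf0 hdeg hdvd
    obtain ⟨h, rfl⟩ := hdvd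
    have hg : g ≠ 0 := left_ne_zero_of_mul hf0
    have hh : h ≠ 0 := right_ne_zero_of_mul hf0
    have hdeg' : ∀ i, g.degreeOf i ≤ d := fun i =>
      le_trans (SparseFactorProof.degreeOf_le_mul g h hg hh i) (hdeg i)
    exact SparseFactorProof.core hn hd g h hg hh hdeg'
end

section
/- There exists an absolute constant C > 0 such that the following holds for all n ≥ 2 and d ≥ 1. Let E ⊆ {0, 1, ..., d}ⁿ ⊆ ℝⁿ be a nonempty finite set and let t be the number of extreme points (vertices) of the convex hull of E. Then t^(C·d²·log n) ≥ |E|. -/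
open Finset Real


private lemma chord_exp {B s x : ℝ} (hB : 0 < B) (hx : |x| ≤ B) :
    Real.exp (s * x) ≤ Real.cosh (s * B) + x / B * Real.sinh (s * B) := by
  obtain ⟨hx1, hx2⟩ := abs_le.1 hx
  have ha : (0:ℝ) ≤ (B + x) / (2 * B) := div_nonneg (by linarith) (by linarith)
  have hb : (0:ℝ) ≤ (B - x) / (2 * B) := div_nonneg (by linarith) (by linarith)
  have hab : (B + x) / (2 * B) + (B - x) / (2 * B) = 1 := by field_simp; ring
  have hcx := convexOn_exp.2 (Set.mem_univ (s * B)) (Set.mem_univ (-(s * B))) ha hb hab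
  simp only [smul_eq_mul] at hcx
  have h1 : (B + x) / (2 * B) * (s * B) + (B - x) / (2 * B) * -(s * B) = s * x := by
    field_simp; ring
  rw [h1] at hcx
  refine hcx.trans_eq ?_
  rw [Real.cosh_eq, Real.sinh_eq, Real.exp_neg]
  have hEne : Real.exp (s * B) ≠ 0 := (Real.exp_pos _).ne'
  field_simp
  ring

private lemma mgf_bound {α : Type*} {V : Finset α} {w X : α → ℝ} {B s : ℝ} (hB : 0 < B)
    (h0 : ∀ y ∈ V, 0 ≤ w y) (h1 : ∑ y ∈ V, w y = 1) (hmean : ∑ y ∈ V, w y * X y = 0)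
    (hbd : ∀ y ∈ V, |X y| ≤ B) :
    ∑ y ∈ V, w y * Real.exp (s * X y) ≤ Real.exp (s ^ 2 * B ^ 2 / 2) := by
  have step : ∑ y ∈ V, w y * Real.exp (s * X y)
      ≤ ∑ y ∈ V, (w y * Real.cosh (s * B) + w y * X y * (Real.sinh (s * B) / B)) := by
    refine Finset.sum_le_sum fun y hy => ?_
    calc w y * Real.exp (s * X y)
        ≤ w y * (Real.cosh (s * B) + X y / B * Real.sinh (s * B)) :=
          mul_le_mul_of_nonneg_left (chord_exp hB (hbd y hy)) (h0 y hy)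
      _ = w y * Real.cosh (s * B) + w y * X y * (Real.sinh (s * B) / B) := by ring
  rw [Finset.sum_add_distrib, ← Finset.sum_mul, ← Finset.sum_mul, h1, one_mul, hmean, zero_mul,
    add_zero] at step
  refine step.trans ?_
  calc Real.cosh (s * B) ≤ Real.exp ((s * B) ^ 2 / 2) := Real.cosh_le_exp_half_sq _
    _ = Real.exp (s ^ 2 * B ^ 2 / 2) := by ring_nf

private lemma tail_bound {α : Type*} [DecidableEq α] (k : ℕ) (V : Finset α) (w X : α → ℝ)
    {B : ℝ} (hB : 1 ≤ B)
    (h0 : ∀ y ∈ V, 0 ≤ w y) (h1 : ∑ y ∈ V, w y = 1)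
    (hmean : ∑ y ∈ V, w y * X y = 0) (hbd : ∀ y ∈ V, |X y| ≤ B)
    (G : Finset (Fin k → α)) (hGP : G ⊆ Fintype.piFinset fun _ : Fin k => V)
    (hGbad : ∀ g ∈ G, (k : ℝ) / 2 ≤ ∑ j, X (g j)) :
    ∑ g ∈ G, ∏ j, w (g j) ≤ Real.exp (-(k : ℝ) / (8 * B ^ 2)) := by
  have hB0 : (0:ℝ) < B := lt_of_lt_of_le one_pos hB
  set s : ℝ := 1 / (2 * B ^ 2) with hs
  have hs0 : 0 < s := by positivity
  have hprodeq : ∀ g : Fin k → α, ∏ j, (w (g j) * Real.exp (s * X (g j)))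
      = (∏ j, w (g j)) * Real.exp (s * ∑ j, X (g j)) := by
    intro g
    rw [Finset.prod_mul_distrib, Finset.mul_sum, Real.exp_sum]
  have key : ∀ g ∈ G, ∏ j, w (g j)
      ≤ Real.exp (-(s * k / 2)) * ∏ j, (w (g j) * Real.exp (s * X (g j))) := by
    intro g hg
    have hmem := Fintype.mem_piFinset.1 (hGP hg)
    have hwnn : 0 ≤ ∏ j, w (g j) := Finset.prod_nonneg fun j _ => h0 _ (hmem j)
    rw [hprodeq g, mul_comm (Real.exp _), mul_assoc, ← Real.exp_add]
    have h1e : (1:ℝ) ≤ Real.exp (s * ∑ j, X (g j) + -(s * ↑k / 2)) := by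
      refine Real.one_le_exp ?_
      have hsum := hGbad g hg
      nlinarith [hs0.le]
    exact le_mul_of_one_le_right hwnn h1e
  have hnn : 0 ≤ ∑ y ∈ V, w y * Real.exp (s * X y) :=
    Finset.sum_nonneg fun y hy => mul_nonneg (h0 y hy) (Real.exp_pos _).le
  calc ∑ g ∈ G, ∏ j, w (g j)
      ≤ ∑ g ∈ G, Real.exp (-(s * k / 2)) * ∏ j, (w (g j) * Real.exp (s * X (g j))) :=
        Finset.sum_le_sum key
    _ ≤ ∑ g ∈ Fintype.piFinset (fun _ : Fin k => V),
          Real.exp (-(s * k / 2)) * ∏ j, (w (g j) * Real.exp (s * X (g j))) := by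
        refine Finset.sum_le_sum_of_subset_of_nonneg hGP fun g hg _ => ?_
        have hmem := Fintype.mem_piFinset.1 hg
        exact mul_nonneg (Real.exp_pos _).le (Finset.prod_nonneg fun j _ =>
          mul_nonneg (h0 _ (hmem j)) (Real.exp_pos _).le)
    _ = Real.exp (-(s * k / 2)) * ∑ g ∈ Fintype.piFinset (fun _ : Fin k => V),
          ∏ j, (w (g j) * Real.exp (s * X (g j))) := by rw [← Finset.mul_sum]
    _ = Real.exp (-(s * k / 2)) * (∑ y ∈ V, w y * Real.exp (s * X y)) ^ k := by
        rw [← Finset.prod_univ_sum (fun _ : Fin k => V) (fun _ y => w y * Real.exp (s * X y))]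
        simp
    _ ≤ Real.exp (-(s * k / 2)) * Real.exp (s ^ 2 * B ^ 2 / 2) ^ k :=
        mul_le_mul_of_nonneg_left
          (pow_le_pow_left₀ hnn (mgf_bound hB0 h0 h1 hmean hbd) k) (Real.exp_pos _).le
    _ = Real.exp (-(s * k / 2) + k * (s ^ 2 * B ^ 2 / 2)) := by
        rw [← Real.exp_nat_mul, ← Real.exp_add]
    _ = Real.exp (-(k : ℝ) / (8 * B ^ 2)) := by
        congr 1
        have hBne : B ≠ 0 := hB0.ne'
        rw [hs]
        field_simp
        ring

private lemma exists_good {n : ℕ} (k : ℕ) {B : ℝ} (hB : 1 ≤ B)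
    (V : Finset (Fin n → ℝ)) (w : (Fin n → ℝ) → ℝ) (z : Fin n → ℝ)
    (h0 : ∀ y ∈ V, 0 ≤ w y) (h1 : ∑ y ∈ V, w y = 1)
    (hz : ∀ i, ∑ y ∈ V, w y * y i = z i)
    (hbd : ∀ y ∈ V, ∀ i, |y i - z i| ≤ B)
    (hsmall : 2 * n * Real.exp (-(k : ℝ) / (8 * B ^ 2)) < 1) :
    ∃ g ∈ Fintype.piFinset (fun _ : Fin k => V),
      ∀ i, |(∑ j, g j i) - k * z i| < k / 2 := by
  classical
  by_contra hcon
  push_neg at hcon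
  set P := Fintype.piFinset (fun _ : Fin k => V) with hP
  set Λ : (Fin k → (Fin n → ℝ)) → ℝ := fun g => ∏ j, w (g j) with hΛ
  have hΛnn : ∀ g ∈ P, 0 ≤ Λ g := fun g hg =>
    Finset.prod_nonneg fun j _ => h0 _ (Fintype.mem_piFinset.1 hg j)
  have hΛ1 : ∑ g ∈ P, Λ g = 1 := by
    rw [hP, hΛ, ← Finset.prod_univ_sum (fun _ : Fin k => V) (fun _ y => w y)]
    simp [h1]
  have hsum_eq : ∀ (g : Fin k → (Fin n → ℝ)) (i : Fin n),
      ∑ j, (g j i - z i) = (∑ j, g j i) - k * z i := by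
    intro g i
    rw [Finset.sum_sub_distrib, Finset.sum_const, Finset.card_univ, Fintype.card_fin,
      nsmul_eq_mul]
  set Gp : Fin n → Finset (Fin k → (Fin n → ℝ)) :=
    fun i => P.filter (fun g => (k : ℝ) / 2 ≤ ∑ j, (g j i - z i)) with hGp
  set Gm : Fin n → Finset (Fin k → (Fin n → ℝ)) :=
    fun i => P.filter (fun g => (k : ℝ) / 2 ≤ ∑ j, (z i - g j i)) with hGm
  have hmeanp : ∀ i, ∑ y ∈ V, w y * (y i - z i) = 0 := by
    intro i
    simp only [mul_sub]
    rw [Finset.sum_sub_distrib, hz i, ← Finset.sum_mul, h1, one_mul, sub_self]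
  have hmeanm : ∀ i, ∑ y ∈ V, w y * (z i - y i) = 0 := by
    intro i
    simp only [mul_sub]
    rw [Finset.sum_sub_distrib, hz i, ← Finset.sum_mul, h1, one_mul, sub_self]
  have htailp : ∀ i, ∑ g ∈ Gp i, Λ g ≤ Real.exp (-(k : ℝ) / (8 * B ^ 2)) := fun i =>
    tail_bound k V w (fun y => y i - z i) hB h0 h1 (hmeanp i) (fun y hy => hbd y hy i)
      (Gp i) (Finset.filter_subset _ _) (fun g hg => (Finset.mem_filter.1 hg).2)
  have htailm : ∀ i, ∑ g ∈ Gm i, Λ g ≤ Real.exp (-(k : ℝ) / (8 * B ^ 2)) := fun i =>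
    tail_bound k V w (fun y => z i - y i) hB h0 h1 (hmeanm i)
      (fun y hy => by rw [abs_sub_comm]; exact hbd y hy i)
      (Gm i) (Finset.filter_subset _ _) (fun g hg => (Finset.mem_filter.1 hg).2)
  have hpt : ∀ g ∈ P, Λ g ≤
      ∑ i, ((if g ∈ Gp i then Λ g else 0) + (if g ∈ Gm i then Λ g else 0)) := by
    intro g hg
    obtain ⟨i, hi⟩ := hcon g hg
    have hsplit : g ∈ Gp i ∨ g ∈ Gm i := by
      rcases le_abs.1 hi with h | h
      · left
        rw [hGp, Finset.mem_filter]
        exact ⟨hg, by rw [hsum_eq g i]; linarith⟩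
      · right
        rw [hGm, Finset.mem_filter]
        refine ⟨hg, ?_⟩
        have : ∑ j, (z i - g j i) = -((∑ j, g j i) - k * z i) := by
          rw [← hsum_eq g i, ← Finset.sum_neg_distrib]
          exact Finset.sum_congr rfl fun j _ => by ring
        rw [this]; linarith
    have hterm : Λ g ≤ (if g ∈ Gp i then Λ g else 0) + (if g ∈ Gm i then Λ g else 0) := by
      rcases hsplit with h | h
      · simp only [if_pos h]
        have : (0:ℝ) ≤ (if g ∈ Gm i then Λ g else 0) := by
          split_ifs; exacts [hΛnn g hg, le_rfl]
        linarith
      · simp only [if_pos h]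
        have : (0:ℝ) ≤ (if g ∈ Gp i then Λ g else 0) := by
          split_ifs; exacts [hΛnn g hg, le_rfl]
        linarith
    refine hterm.trans (Finset.single_le_sum
      (f := fun i' => (if g ∈ Gp i' then Λ g else 0) + (if g ∈ Gm i' then Λ g else 0))
      (fun i' _ => ?_) (Finset.mem_univ i))
    have h1' : (0:ℝ) ≤ (if g ∈ Gp i' then Λ g else 0) := by
      split_ifs; exacts [hΛnn g hg, le_rfl]
    have h2' : (0:ℝ) ≤ (if g ∈ Gm i' then Λ g else 0) := by
      split_ifs; exacts [hΛnn g hg, le_rfl]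
    exact add_nonneg h1' h2'
  have hone : (1 : ℝ) ≤ ∑ i, ((∑ g ∈ Gp i, Λ g) + (∑ g ∈ Gm i, Λ g)) := by
    rw [← hΛ1]
    calc ∑ g ∈ P, Λ g
        ≤ ∑ g ∈ P, ∑ i, ((if g ∈ Gp i then Λ g else 0) + (if g ∈ Gm i then Λ g else 0)) :=
          Finset.sum_le_sum hpt
      _ = ∑ i, ∑ g ∈ P, ((if g ∈ Gp i then Λ g else 0) + (if g ∈ Gm i then Λ g else 0)) :=
          Finset.sum_comm
      _ = ∑ i, ((∑ g ∈ Gp i, Λ g) + (∑ g ∈ Gm i, Λ g)) := by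
          refine Finset.sum_congr rfl fun i _ => ?_
          rw [Finset.sum_add_distrib, Finset.sum_ite_mem, Finset.sum_ite_mem,
            Finset.inter_eq_right.2 (Finset.filter_subset _ _),
            Finset.inter_eq_right.2 (Finset.filter_subset _ _)]
  have hfin : (1 : ℝ) ≤ 2 * n * Real.exp (-(k : ℝ) / (8 * B ^ 2)) := by
    refine hone.trans ?_
    calc ∑ i, ((∑ g ∈ Gp i, Λ g) + (∑ g ∈ Gm i, Λ g))
        ≤ ∑ _i : Fin n, 2 * Real.exp (-(k : ℝ) / (8 * B ^ 2)) :=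
          Finset.sum_le_sum fun i _ => by linarith [htailp i, htailm i]
      _ = 2 * n * Real.exp (-(k : ℝ) / (8 * B ^ 2)) := by
          rw [Finset.sum_const, Finset.card_univ, Fintype.card_fin, nsmul_eq_mul]; ring
  linarith

/-- **Vertices of convex hulls of subsets of `{0, 1, ..., d}ⁿ`.** There is an absolute
constant `C > 0` such that for all `n ≥ 2`, `d ≥ 1`, and every nonempty finite
`E ⊆ {0, 1, ..., d}ⁿ ⊆ ℝⁿ`, if `t` is the number of extreme points of the convex hull
of `E`, then `t ^ (C * d² * log n) ≥ |E|`. -/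
theorem stmt2 :
    ∃ C : ℝ, 0 < C ∧
      ∀ (n d : ℕ), 2 ≤ n → 1 ≤ d →
        ∀ E : Finset (Fin n → ℝ), E.Nonempty →
          (∀ x ∈ E, ∀ i : Fin n, ∃ m : ℕ, m ≤ d ∧ x i = (m : ℝ)) →
          (E.card : ℝ) ≤
            ((Set.extremePoints ℝ (convexHull ℝ (E : Set (Fin n → ℝ)))).ncard : ℝ) ^
              (C * (d : ℝ)^2 * Real.log n) := by
  classical
  refine ⟨48, by norm_num, ?_⟩
  intro n d hn hd E hE hlat
  have hd1 : (1:ℝ) ≤ (d:ℝ) := by exact_mod_cast hd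
  have hn2 : (2:ℝ) ≤ (n:ℝ) := by exact_mod_cast hn
  -- extreme points
  set S := Set.extremePoints ℝ (convexHull ℝ (E : Set (Fin n → ℝ))) with hSdef
  have hSE : S ⊆ (E : Set (Fin n → ℝ)) := extremePoints_convexHull_subset
  have hSfin : S.Finite := E.finite_toSet.subset hSE
  set V : Finset (Fin n → ℝ) := hSfin.toFinset with hVdef
  have hVcoe : (V : Set (Fin n → ℝ)) = S := hSfin.coe_toFinset
  have hncard : S.ncard = V.card := by
    rw [← hVcoe, Set.ncard_coe_finset]
  have hKM : convexHull ℝ (V : Set (Fin n → ℝ)) = convexHull ℝ (E : Set (Fin n → ℝ)) := by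
    rw [hVcoe]
    have h1 := closure_convexHull_extremePoints
      (E.finite_toSet.isCompact_convexHull (𝕜 := ℝ)) (convex_convexHull ℝ _)
    rwa [(hSfin.isClosed_convexHull (𝕜 := ℝ)).closure_eq] at h1
  have hEV : ∀ z ∈ E, z ∈ convexHull ℝ (V : Set (Fin n → ℝ)) := fun z hz =>
    hKM ▸ subset_convexHull ℝ _ hz
  obtain ⟨z₀, hz₀⟩ := hE
  have hVne : V.Nonempty := by
    rcases Finset.eq_empty_or_nonempty V with h | h
    · exfalso
      have := hEV z₀ hz₀
      rw [h] at this
      simp [convexHull_empty] at this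
    · exact h
  have htpos : 1 ≤ V.card := hVne.card_pos
  -- choose k
  set m : ℕ := ⌈Real.log (2 * n)⌉₊ + 1 with hm
  set k : ℕ := 8 * d ^ 2 * m with hk
  have hkpos : 0 < k := by
    rw [hk, hm]
    exact Nat.mul_pos (Nat.mul_pos (by norm_num) (pow_pos hd 2)) (Nat.succ_pos _)
  have hkR : (0:ℝ) < (k:ℝ) := by exact_mod_cast hkpos
  have hkreal : (k:ℝ) = 8 * (d:ℝ)^2 * (m:ℝ) := by rw [hk]; push_cast; ring
  have h2npos : (0:ℝ) < 2 * n := by linarith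
  have hlogm : Real.log (2 * n) < (m:ℝ) := by
    have h := Nat.le_ceil (Real.log (2 * (n:ℝ)))
    have : ((⌈Real.log (2 * (n:ℝ))⌉₊ : ℕ) : ℝ) + 1 = (m:ℝ) := by rw [hm]; push_cast; ring
    linarith
  have hsmall : 2 * n * Real.exp (-(k : ℝ) / (8 * (d:ℝ) ^ 2)) < 1 := by
    have hexp : -(k:ℝ) / (8 * (d:ℝ)^2) = -(m:ℝ) := by
      rw [hkreal]
      have : (d:ℝ) ≠ 0 := by linarith
      field_simp
    rw [hexp]
    have hlt : 2 * (n:ℝ) < Real.exp (m:ℝ) := by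
      rw [← Real.exp_log h2npos]
      exact Real.exp_lt_exp.2 hlogm
    calc 2 * (n:ℝ) * Real.exp (-(m:ℝ)) < Real.exp (m:ℝ) * Real.exp (-(m:ℝ)) :=
        mul_lt_mul_of_pos_right hlt (Real.exp_pos _)
      _ = 1 := by rw [← Real.exp_add]; simp
  -- coordinate bounds
  have hrange : ∀ x ∈ E, ∀ i, 0 ≤ x i ∧ x i ≤ (d:ℝ) := by
    intro x hx i
    obtain ⟨mm, hmm, hxm⟩ := hlat x hx i
    constructor
    · rw [hxm]; positivity
    · rw [hxm]; exact_mod_cast hmm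
  -- existence of good tuples
  have hex : ∀ z ∈ E, ∃ g ∈ Fintype.piFinset (fun _ : Fin k => V),
      ∀ i, |(∑ j, g j i) - k * z i| < k / 2 := by
    intro z hz
    have hmem := hEV z hz
    rw [Finset.convexHull_eq] at hmem
    obtain ⟨w, h0, h1, hcm⟩ := hmem
    rw [Finset.centerMass_eq_of_sum_1 _ _ h1] at hcm
    have hzi : ∀ i, ∑ y ∈ V, w y * y i = z i := by
      intro i
      have hfc := congrFun hcm i
      rw [Finset.sum_apply] at hfc
      simpa using hfc
    have hbd : ∀ y ∈ V, ∀ i, |y i - z i| ≤ (d:ℝ) := by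
      intro y hy i
      have hyE : y ∈ E := by
        have : y ∈ S := by rwa [← hVcoe]
        exact hSE this
      obtain ⟨hy1, hy2⟩ := hrange y hyE i
      obtain ⟨hz1, hz2⟩ := hrange z hz i
      rw [abs_le]
      constructor <;> linarith
    exact exists_good k hd1 V w z h0 h1 hzi hbd hsmall
  choose! g hgP hgood using hex
  -- injectivity
  have hinj : Set.InjOn g (E : Set (Fin n → ℝ)) := by
    intro z hz z' hz' hgg
    rw [Finset.mem_coe] at hz hz'
    funext i
    have h1' := hgood z hz i
    have h2' := hgood z' hz' i
    rw [hgg] at h1'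
    rw [abs_lt] at h1' h2'
    have habs : |z i - z' i| < 1 := by
      have hk' : |(k:ℝ) * (z i - z' i)| < (k:ℝ) * 1 := by
        rw [mul_sub, mul_one, abs_lt]
        constructor <;> linarith [h1'.1, h1'.2, h2'.1, h2'.2]
      rw [abs_mul, abs_of_pos hkR] at hk'
      exact (mul_lt_mul_iff_right₀ hkR).1 hk'
    obtain ⟨m1, hm1, he1⟩ := hlat z hz i
    obtain ⟨m2, hm2, he2⟩ := hlat z' hz' i
    rw [he1, he2] at habs
    have hint : ((m1:ℤ) - (m2:ℤ)) = 0 := by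
      have hcast : |(((m1:ℤ) - (m2:ℤ) : ℤ) : ℝ)| < 1 := by push_cast; exact habs
      rw [← Int.cast_abs] at hcast
      exact Int.abs_lt_one_iff.1 (by exact_mod_cast hcast)
    have : m1 = m2 := by omega
    rw [he1, he2, this]
  have hcount : E.card ≤ V.card ^ k := by
    have h := Finset.card_le_card_of_injOn g (fun z hz => hgP z hz) hinj
    calc E.card ≤ (Fintype.piFinset (fun _ : Fin k => V)).card := h
      _ = V.card ^ k := by simp [Fintype.card_piFinset]
  -- final arithmetic
  have hlogn2 : Real.log 2 ≤ Real.log n := Real.log_le_log (by norm_num) hn2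
  have hlog2 : (0.6931471803 : ℝ) < Real.log 2 := Real.log_two_gt_d9
  have hmle : (m:ℝ) ≤ 6 * Real.log n := by
    have hceil : (⌈Real.log (2 * (n:ℝ))⌉₊ : ℝ) < Real.log (2 * (n:ℝ)) + 1 :=
      Nat.ceil_lt_add_one (Real.log_nonneg (by linarith))
    have hmul : Real.log (2 * (n:ℝ)) = Real.log 2 + Real.log n :=
      Real.log_mul (by norm_num) (by linarith)
    have hmR : (m:ℝ) = (⌈Real.log (2 * (n:ℝ))⌉₊ : ℝ) + 1 := by rw [hm]; push_cast; ring
    linarith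
  have hkle : (k:ℝ) ≤ 48 * (d:ℝ)^2 * Real.log n := by
    rw [hkreal]
    have hd2 : (1:ℝ) ≤ (d:ℝ)^2 := by nlinarith
    nlinarith [Real.log_nonneg (by linarith : (1:ℝ) ≤ (n:ℝ))]
  rw [hncard]
  calc (E.card : ℝ) ≤ (V.card : ℝ) ^ (k:ℕ) := by exact_mod_cast hcount
    _ = (V.card : ℝ) ^ ((k:ℕ):ℝ) := (Real.rpow_natCast _ _).symm
    _ ≤ (V.card : ℝ) ^ (48 * (d:ℝ)^2 * Real.log n) :=
        Real.rpow_le_rpow_of_exponent_le (by exact_mod_cast htpos) hkle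
end

section
/- Let A and B be nonempty finite subsets of ℝⁿ, and let P₁ = conv(A), P₂ = conv(B) be their convex hulls. Then the Minkowski sum P₁ + P₂ equals the convex hull of the finite set A + B = {a + b : a ∈ A, b ∈ B} (in particular it is a polytope), and the number of extreme points of P₁ + P₂ is at least the maximum of the number of extreme points of P₁ and the number of extreme points of P₂. -/
open scoped Pointwise

open Set

/-- Every extreme point of the convex hull of a finite set is exposed by a continuous
linear functional, strictly. -/
lemma expose_aux {n : ℕ} (A : Finset (Fin n → ℝ)) {p : Fin n → ℝ}
    (hp : p ∈ Set.extremePoints ℝ (convexHull ℝ (A : Set (Fin n → ℝ)))) :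
    ∃ f : (Fin n → ℝ) →L[ℝ] ℝ,
      ∀ x ∈ convexHull ℝ (A : Set (Fin n → ℝ)), x ≠ p → f x < f p := by
  have hpA : p ∈ (A : Set (Fin n → ℝ)) := extremePoints_convexHull_subset hp
  set S : Set (Fin n → ℝ) := (A : Set (Fin n → ℝ)) \ {p} with hS
  have hSfin : S.Finite := A.finite_toSet.diff
  rcases S.eq_empty_or_nonempty with hSe | hSne
  · -- A ⊆ {p}, so conv A = {p}
    refine ⟨0, fun x hx hxp => absurd ?_ hxp⟩
    have hsub : (A : Set (Fin n → ℝ)) ⊆ {p} := by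
      intro a ha
      by_contra hap
      exact (Set.eq_empty_iff_forall_notMem.1 hSe a) ⟨ha, hap⟩
    have := convexHull_mono hsub hx
    rwa [convexHull_singleton] at this
  · have hpS : p ∉ convexHull ℝ S := by
      intro hmem
      have hext : p ∈ Set.extremePoints ℝ (convexHull ℝ S) := by
        rw [mem_extremePoints]
        refine ⟨hmem, fun x₁ h₁ x₂ h₂ hseg => ?_⟩
        have hsub : convexHull ℝ S ⊆ convexHull ℝ (A : Set (Fin n → ℝ)) :=
          convexHull_mono Set.diff_subset
        exact (mem_extremePoints.1 hp).2 _ (hsub h₁) _ (hsub h₂) hseg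
      have := extremePoints_convexHull_subset hext
      exact this.2 rfl
    obtain ⟨f, u, hfu, hup⟩ := geometric_hahn_banach_closed_point
      (convex_convexHull ℝ S) ((hSfin.isCompact_convexHull ℝ).isClosed) hpS
    refine ⟨f, fun x hx hxp => ?_⟩
    have hAins : (A : Set (Fin n → ℝ)) = insert p S := by
      rw [hS, Set.insert_diff_singleton, Set.insert_eq_of_mem hpA]
    rw [hAins, convexHull_insert hSne] at hx
    obtain ⟨y, hy, z, hz, hxseg⟩ := mem_convexJoin.1 hx
    rw [Set.mem_singleton_iff] at hy
    rw [hy] at hxseg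
    obtain ⟨a, b, ha, hb, hab, hxe⟩ := hxseg
    have hfz : f z < u := hfu z hz
    have hfx : f x = a * f p + b * f z := by
      rw [← hxe]; simp [map_add, map_smul, smul_eq_mul]
    rcases eq_or_lt_of_le hb with hb0 | hb0
    · exfalso
      apply hxp
      have hb' : b = 0 := hb0.symm
      have ha1 : a = 1 := by linarith
      rw [← hxe, hb', ha1]; simp
    · have ha' : a = 1 - b := by linarith
      rw [ha'] at hfx
      nlinarith [mul_lt_mul_of_pos_left (hfz.trans hup) hb0]

/-- Key inequality: extreme points of `conv A` inject into extreme points of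
`conv A + conv B`. -/
lemma aux_le {n : ℕ} (A B : Finset (Fin n → ℝ)) (hB : B.Nonempty) :
    (Set.extremePoints ℝ (convexHull ℝ (A : Set (Fin n → ℝ)))).ncard ≤
      (Set.extremePoints ℝ (convexHull ℝ (A : Set (Fin n → ℝ)) +
        convexHull ℝ (B : Set (Fin n → ℝ)))).ncard := by
  set P := convexHull ℝ (A : Set (Fin n → ℝ)) with hPdef
  set Q := convexHull ℝ (B : Set (Fin n → ℝ)) with hQdef
  have hQcomp : IsCompact Q := B.finite_toSet.isCompact_convexHull ℝ
  have hQne : Q.Nonempty := hB.to_set.convexHull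
  -- Step 1: for each extreme point p of P there is q ∈ Q with p + q extreme in P + Q.
  have key : ∀ p ∈ Set.extremePoints ℝ P, ∃ q, q ∈ Q ∧ p + q ∈ Set.extremePoints ℝ (P + Q) := by
    intro p hp
    obtain ⟨f, hf⟩ := expose_aux A hp
    have hpP : p ∈ P := extremePoints_subset hp
    have hfP : ∀ x ∈ P, f x ≤ f p := by
      intro x hx
      rcases eq_or_ne x p with rfl | hxp
      · exact le_refl _
      · exact (hf x hx hxp).le
    -- the exposed face of Q along f
    set E := f.toExposed Q with hEdef
    have hEexp : IsExposed ℝ Q E := ContinuousLinearMap.toExposed.isExposed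
    have hEne : E.Nonempty := by
      obtain ⟨q₀, hq₀Q, hq₀⟩ := hQcomp.exists_isMaxOn hQne f.continuous.continuousOn
      exact ⟨q₀, hq₀Q, fun y hy => hq₀ hy⟩
    have hEcomp : IsCompact E := hEexp.isCompact hQcomp
    obtain ⟨q, hqE⟩ := hEcomp.extremePoints_nonempty hEne
    have hqQ : q ∈ Set.extremePoints ℝ Q :=
      hEexp.isExtreme.extremePoints_subset_extremePoints hqE
    have hqmem : q ∈ E := extremePoints_subset hqE
    obtain ⟨hqQ', hqmax⟩ := hqmem
    refine ⟨q, hqQ', ?_⟩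
    rw [mem_extremePoints]
    refine ⟨Set.add_mem_add hpP hqQ', fun u hu v hv hseg => ?_⟩
    obtain ⟨u₁, hu₁, u₂, hu₂, rfl⟩ := Set.mem_add.1 hu
    obtain ⟨v₁, hv₁, v₂, hv₂, rfl⟩ := Set.mem_add.1 hv
    obtain ⟨a, b, ha, hb, hab, heq⟩ := hseg
    have hfeq : a * f u₁ + a * f u₂ + (b * f v₁ + b * f v₂) = f p + f q := by
      have := congrArg f heq
      simpa [map_add, map_smul, smul_eq_mul, mul_add] using this
    have hu₁le : f u₁ ≤ f p := hfP u₁ hu₁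
    have hv₁le : f v₁ ≤ f p := hfP v₁ hv₁
    have hu₂le : f u₂ ≤ f q := hqmax u₂ hu₂
    have hv₂le : f v₂ ≤ f q := hqmax v₂ hv₂
    have e1 : a * f p + b * f p = f p := by rw [← add_mul, hab, one_mul]
    have e2 : a * f q + b * f q = f q := by rw [← add_mul, hab, one_mul]
    have pu₁ : a * f u₁ ≤ a * f p := mul_le_mul_of_nonneg_left hu₁le ha.le
    have pv₁ : b * f v₁ ≤ b * f p := mul_le_mul_of_nonneg_left hv₁le hb.le
    have pu₂ : a * f u₂ ≤ a * f q := mul_le_mul_of_nonneg_left hu₂le ha.le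
    have pv₂ : b * f v₂ ≤ b * f q := mul_le_mul_of_nonneg_left hv₂le hb.le
    have hu₁p : u₁ = p := by
      by_contra h
      have hlt : f u₁ < f p := hf u₁ hu₁ h
      have : a * f u₁ < a * f p := mul_lt_mul_of_pos_left hlt ha
      linarith
    have hv₁p : v₁ = p := by
      by_contra h
      have hlt : f v₁ < f p := hf v₁ hv₁ h
      have : b * f v₁ < b * f p := mul_lt_mul_of_pos_left hlt hb
      linarith
    have hqseg : q ∈ openSegment ℝ u₂ v₂ := by
      refine ⟨a, b, ha, hb, hab, ?_⟩
      have hassoc : a • (p + u₂) + b • (p + v₂) = (a + b) • p + (a • u₂ + b • v₂) := by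
        rw [smul_add, smul_add, add_smul]; abel
      have h2 : p + (a • u₂ + b • v₂) = p + q := by
        rw [← heq, hu₁p, hv₁p, hassoc, hab, one_smul]
      exact add_left_cancel h2
    obtain ⟨h1, h2⟩ := (mem_extremePoints.1 hqQ).2 _ hu₂ _ hv₂ hqseg
    rw [hu₁p, hv₁p, h1, h2]
    exact ⟨rfl, rfl⟩
  choose! F hF1 hF2 using key
  -- Step 2: injectivity via uniqueness of decomposition at extreme points.
  have hfin : (Set.extremePoints ℝ (P + Q)).Finite := by
    have : P + Q = convexHull ℝ ((A : Set (Fin n → ℝ)) + (B : Set (Fin n → ℝ))) :=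
      (convexHull_add _ _).symm
    rw [this]
    exact (A.finite_toSet.add B.finite_toSet).subset (extremePoints_convexHull_subset)
  refine Set.ncard_le_ncard_of_injOn (fun p => p + F p) (fun p hp => hF2 p hp) ?_ hfin
  intro p hp p' hp' hpp'
  simp only at hpp'
  have hx : p + F p ∈ Set.extremePoints ℝ (P + Q) := hF2 p hp
  have hmem1 : p + F p' ∈ P + Q :=
    Set.add_mem_add (extremePoints_subset hp) (hF1 p' hp')
  have hmem2 : p' + F p ∈ P + Q :=
    Set.add_mem_add (extremePoints_subset hp') (hF1 p hp)
  have hseg : p + F p ∈ openSegment ℝ (p + F p') (p' + F p) := by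
    refine ⟨1/2, 1/2, by norm_num, by norm_num, by norm_num, ?_⟩
    calc (1/2 : ℝ) • (p + F p') + (1/2 : ℝ) • (p' + F p)
        = (1/2 : ℝ) • ((p + F p') + (p' + F p)) := (smul_add _ _ _).symm
      _ = (1/2 : ℝ) • ((p + F p) + (p' + F p')) := by
          rw [show (p + F p') + (p' + F p) = (p + F p) + (p' + F p') from by abel]
      _ = (1/2 : ℝ) • ((p + F p) + (p + F p)) := by rw [← hpp']
      _ = p + F p := by rw [← two_smul ℝ, smul_smul]; norm_num
  obtain ⟨h1, h2⟩ := (mem_extremePoints.1 hx).2 _ hmem1 _ hmem2 hseg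
  have hFe : F p' = F p := add_left_cancel h1
  rw [hFe] at hpp'
  exact add_right_cancel hpp'

/-- **Minkowski sums of polytopes.** For nonempty finite `A, B ⊆ ℝⁿ` with convex hulls
`P₁ = conv(A)` and `P₂ = conv(B)`, the Minkowski sum `P₁ + P₂` equals the convex hull of
the finite set `A + B` (so it is a polytope), and the number of extreme points of
`P₁ + P₂` is at least the maximum of the numbers of extreme points of `P₁` and `P₂`. -/
theorem stmt3 {n : ℕ} (A B : Finset (Fin n → ℝ)) (hA : A.Nonempty) (hB : B.Nonempty) :
    convexHull ℝ (A : Set (Fin n → ℝ)) + convexHull ℝ (B : Set (Fin n → ℝ)) =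
      convexHull ℝ ((A : Set (Fin n → ℝ)) + (B : Set (Fin n → ℝ))) ∧
    max ((Set.extremePoints ℝ (convexHull ℝ (A : Set (Fin n → ℝ)))).ncard)
        ((Set.extremePoints ℝ (convexHull ℝ (B : Set (Fin n → ℝ)))).ncard) ≤
      (Set.extremePoints ℝ
        (convexHull ℝ (A : Set (Fin n → ℝ)) + convexHull ℝ (B : Set (Fin n → ℝ)))).ncard := by
  refine ⟨(convexHull_add _ _).symm, max_le (aux_le A B hB) ?_⟩
  have := aux_le B A hA
  rwa [add_comm (convexHull ℝ (B : Set (Fin n → ℝ)))] at this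
end

section
/- Let A and B be nonempty finite subsets of ℝⁿ. For every extreme point u of the convex hull of A there exists an extreme point v of the convex hull of B such that u + v is an extreme point of the convex hull of A + B = {a + b : a ∈ A, b ∈ B}, and moreover u + v cannot be written as a' + b' with a' ∈ conv(A), b' ∈ conv(B) and (a', b') ≠ (u, v). -/
open scoped Pointwise

/-- For nonempty finite `A, B ⊆ ℝⁿ`: for every extreme point `u` of `conv(A)` there is an
extreme point `v` of `conv(B)` such that `u + v` is an extreme point of `conv(A + B)`,
and `u + v` has no other representation as `a' + b'` with `a' ∈ conv(A)`, `b' ∈ conv(B)`. -/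
theorem stmt4 {n : ℕ} (A B : Finset (Fin n → ℝ)) (hA : A.Nonempty) (hB : B.Nonempty) :
    ∀ u ∈ Set.extremePoints ℝ (convexHull ℝ (A : Set (Fin n → ℝ))),
      ∃ v ∈ Set.extremePoints ℝ (convexHull ℝ (B : Set (Fin n → ℝ))),
        (u + v) ∈ Set.extremePoints ℝ
            (convexHull ℝ ((A : Set (Fin n → ℝ)) + (B : Set (Fin n → ℝ)))) ∧
        ∀ a' ∈ convexHull ℝ (A : Set (Fin n → ℝ)),
          ∀ b' ∈ convexHull ℝ (B : Set (Fin n → ℝ)),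
            a' + b' = u + v → a' = u ∧ b' = v := by
  intro u hu
  have huA : u ∈ (A : Set (Fin n → ℝ)) := extremePoints_convexHull_subset hu
  -- u is not in the convex hull of A \ {u}
  have hu' : u ∉ convexHull ℝ ((A : Set (Fin n → ℝ)) \ {u}) := by
    have h := ((convex_convexHull ℝ (A : Set (Fin n → ℝ))).mem_extremePoints_iff_mem_diff_convexHull_diff).mp hu
    intro hc
    exact h.2 (convexHull_mono (Set.diff_subset_diff_left (subset_convexHull ℝ _)) hc)
  -- separate u from conv(A \ {u})
  obtain ⟨f, c, hfc, hcu⟩ := geometric_hahn_banach_closed_point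
    (convex_convexHull ℝ _) ((A.finite_toSet.diff (t := {u})).isCompact_convexHull ℝ).isClosed hu'
  -- key property: f exposes u on conv A
  have key : ∀ a' ∈ convexHull ℝ (A : Set (Fin n → ℝ)), f a' ≤ f u ∧ (f a' = f u → a' = u) := by
    intro a' ha'
    rcases Set.eq_empty_or_nonempty ((A : Set (Fin n → ℝ)) \ {u}) with he | hne
    · have hAu : (A : Set (Fin n → ℝ)) = {u} := by
        rw [Set.diff_eq_empty] at he
        exact Set.Subset.antisymm he (Set.singleton_subset_iff.2 huA)
      rw [hAu, convexHull_singleton, Set.mem_singleton_iff] at ha'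
      subst ha'
      exact ⟨le_rfl, fun _ => rfl⟩
    · have hins : insert u ((A : Set (Fin n → ℝ)) \ {u}) = (A : Set (Fin n → ℝ)) := by
        rw [Set.insert_diff_singleton]
        exact Set.insert_eq_self.2 huA
      rw [← hins, convexHull_insert hne, mem_convexJoin] at ha'
      obtain ⟨x, hx, y, hy, hseg⟩ := ha'
      rw [Set.mem_singleton_iff] at hx
      rw [hx] at hseg
      obtain ⟨s, t, hs, ht, hst, hsum⟩ := hseg
      have hfy : f y < f u := lt_trans (hfc y hy) hcu
      have hfa' : f a' = s * f u + t * f y := by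
        rw [← hsum]; simp [map_add, map_smul]
      rcases eq_or_lt_of_le ht with ht0 | ht0
      · have hs1 : s = 1 := by linarith
        have : a' = u := by rw [← hsum, ← ht0, hs1]; simp
        exact ⟨by rw [this], fun _ => this⟩
      · have hlt : f a' < f u := by
          have h2 : s * f u + t * f u = f u := by rw [← add_mul, hst, one_mul]
          have h3 : t * f y < t * f u := by nlinarith
          rw [hfa']; linarith
        exact ⟨le_of_lt hlt, fun h => absurd h (ne_of_lt hlt)⟩
  -- maximum of f on B
  set M := B.sup' hB f with hMdef
  obtain ⟨b₀, hb₀B, hb₀⟩ := B.exists_mem_eq_sup' hB f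
  have hfB : ∀ b' ∈ convexHull ℝ (B : Set (Fin n → ℝ)), f b' ≤ M := by
    intro b' hb'
    have hsub : convexHull ℝ (B : Set (Fin n → ℝ)) ⊆ {x | f x ≤ M} :=
      convexHull_min (fun b hb => Finset.le_sup' f (by exact_mod_cast hb))
        (convex_halfSpace_le (f.toLinearMap.isLinear) M)
    exact hsub hb'
  -- the face of conv B where f attains its maximum
  set F : Set (Fin n → ℝ) := convexHull ℝ (B : Set (Fin n → ℝ)) ∩ {x | f x = M} with hFdef
  have hb₀conv : b₀ ∈ convexHull ℝ (B : Set (Fin n → ℝ)) := subset_convexHull ℝ _ (by exact_mod_cast hb₀B)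
  have hFne : F.Nonempty := ⟨b₀, hb₀conv, hb₀.symm⟩
  have hFcompact : IsCompact F :=
    (B.finite_toSet.isCompact_convexHull ℝ).inter_right
      (isClosed_singleton.preimage f.continuous)
  obtain ⟨v, hvF⟩ := hFcompact.extremePoints_nonempty hFne
  have hvM : f v = M := hvF.1.2
  have hvconv : v ∈ convexHull ℝ (B : Set (Fin n → ℝ)) := hvF.1.1
  -- F is an exposed, hence extreme, subset of conv B
  have hexp : IsExposed ℝ (convexHull ℝ (B : Set (Fin n → ℝ))) F := by
    intro _
    refine ⟨f, ?_⟩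
    ext x
    constructor
    · rintro ⟨hx, hxM⟩
      exact ⟨hx, fun y hy => by rw [Set.mem_setOf_eq] at hxM; rw [hxM]; exact hfB y hy⟩
    · rintro ⟨hx, hmax⟩
      refine ⟨hx, le_antisymm (hfB x hx) ?_⟩
      have := hmax b₀ hb₀conv
      rw [← hb₀] at this
      exact this
  have hv : v ∈ Set.extremePoints ℝ (convexHull ℝ (B : Set (Fin n → ℝ))) :=
    hexp.isExtreme.extremePoints_subset_extremePoints hvF
  refine ⟨v, hv, ?_, ?_⟩
  · -- u + v is an extreme point of conv(A + B)
    rw [convexHull_add]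
    rw [mem_extremePoints]
    refine ⟨Set.add_mem_add (hu.1) hvconv, ?_⟩
    intro x₁ hx₁ x₂ hx₂ hseg
    obtain ⟨a₁, ha₁, b₁, hb₁, rfl⟩ := hx₁
    obtain ⟨a₂, ha₂, b₂, hb₂, rfl⟩ := hx₂
    obtain ⟨s, t, hs, ht, hst, hsum⟩ := hseg
    have hfa₁ := (key a₁ ha₁).1
    have hfa₂ := (key a₂ ha₂).1
    have hfb₁ := hfB b₁ hb₁
    have hfb₂ := hfB b₂ hb₂
    have hfsum : s * f a₁ + s * f b₁ + (t * f a₂ + t * f b₂) = f u + M := by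
      have := congrArg f hsum
      simpa [map_add, map_smul, hvM] using this
    have hsb1 : s * f b₁ ≤ s * M := mul_le_mul_of_nonneg_left hfb₁ hs.le
    have hsa1 : s * f a₁ ≤ s * f u := mul_le_mul_of_nonneg_left hfa₁ hs.le
    have htb2 : t * f b₂ ≤ t * M := mul_le_mul_of_nonneg_left hfb₂ ht.le
    have hta2 : t * f a₂ ≤ t * f u := mul_le_mul_of_nonneg_left hfa₂ ht.le
    have h5 : s * f u + t * f u = f u := by rw [← add_mul, hst, one_mul]
    have h6 : s * M + t * M = M := by rw [← add_mul, hst, one_mul]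
    have e1 : f a₁ = f u :=
      le_antisymm hfa₁ (le_of_mul_le_mul_left (by linarith) hs)
    have e2 : f b₁ = M :=
      le_antisymm hfb₁ (le_of_mul_le_mul_left (by linarith) hs)
    have e3 : f a₂ = f u :=
      le_antisymm hfa₂ (le_of_mul_le_mul_left (by linarith) ht)
    have e4 : f b₂ = M :=
      le_antisymm hfb₂ (le_of_mul_le_mul_left (by linarith) ht)
    have ha₁u : a₁ = u := (key a₁ ha₁).2 e1
    have ha₂u : a₂ = u := (key a₂ ha₂).2 e3
    have hb₁F : b₁ ∈ F := ⟨hb₁, e2⟩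
    have hb₂F : b₂ ∈ F := ⟨hb₂, e4⟩
    rw [ha₁u, ha₂u] at hsum
    have h2 : u + (s • b₁ + t • b₂) = u + v := by
      rw [← hsum]
      show u + (s • b₁ + t • b₂) = s • (u + b₁) + t • (u + b₂)
      rw [smul_add, smul_add,
        show s • u + s • b₁ + (t • u + t • b₂) = (s • u + t • u) + (s • b₁ + t • b₂) by abel,
        ← add_smul, hst, one_smul]
    have hv' : s • b₁ + t • b₂ = v := add_left_cancel h2
    have hbseg : v ∈ openSegment ℝ b₁ b₂ := ⟨s, t, hs, ht, hst, hv'⟩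
    have hb₁v : b₁ = v := hvF.2 hb₁F hb₂F hbseg
    have hb₂v : b₂ = v := hvF.2 hb₂F hb₁F (by rw [openSegment_symm]; exact hbseg)
    constructor
    · show a₁ + b₁ = u + v; rw [ha₁u, hb₁v]
    · show a₂ + b₂ = u + v; rw [ha₂u, hb₂v]
  · -- uniqueness of the decomposition
    intro a' ha' b' hb' heq
    have hfa' := (key a' ha').1
    have hfb' := hfB b' hb'
    have hfsum : f a' + f b' = f u + M := by
      have := congrArg f heq
      simpa [map_add, hvM] using this
    have ha'u : a' = u := (key a' ha').2 (by linarith)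
    subst ha'u
    exact ⟨rfl, add_left_cancel heq⟩
end

section
/- Let F be a field and let f, g, h be nonzero polynomials in F[x_1, ..., x_n] with f = g·h. Then the Newton polytope of f equals the Minkowski sum of the Newton polytope of g and the Newton polytope of h: P_f = P_g + P_h. -/
open scoped Pointwise

/-- The Newton polytope of a nonzero polynomial `f ∈ F[x_1, ..., x_n]`: the convex hull in
`ℝⁿ` of the set of exponent vectors of monomials of `f` with nonzero coefficient. -/
noncomputable def newtonPolytope {F : Type*} [Field F] {n : ℕ}
    (f : MvPolynomial (Fin n) F) : Set (Fin n → ℝ) :=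
  convexHull ℝ ((fun m : Fin n →₀ ℕ => fun i : Fin n => (m i : ℝ)) ''
    (f.support : Set (Fin n →₀ ℕ)))

/-- The exponent-vector embedding as an additive monoid hom. -/
noncomputable def expMap (n : ℕ) : (Fin n →₀ ℕ) →+ (Fin n → ℝ) where
  toFun m := fun i => (m i : ℝ)
  map_zero' := by ext i; simp
  map_add' a b := by ext i; simp

lemma expMap_injective (n : ℕ) : Function.Injective (expMap n) := by
  intro a b hab
  ext i
  have h2 : ((a i : ℝ)) = ((b i : ℝ)) := congrFun hab i
  exact_mod_cast h2

/-- Uniqueness of decomposition of an extreme point of a Minkowski sum. -/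
lemma extreme_add_unique {E : Type*} [AddCommGroup E] [Module ℝ E]
    {A B : Set E} {x a a' b b' : E}
    (hx : x ∈ (A + B).extremePoints ℝ)
    (ha : a ∈ A) (hb : b ∈ B) (ha' : a' ∈ A) (hb' : b' ∈ B)
    (hab : a + b = x) (hab' : a' + b' = x) : a = a' ∧ b = b' := by
  have key : a + b' = x := by
    by_cases hcase : a + b' = a' + b
    · have h2 : (2 : ℝ) • (a + b') = (2 : ℝ) • x := by
        have e1 : (a + b') + (a' + b) = (a + b) + (a' + b') := by abel
        rw [hab, hab'] at e1
        rw [two_smul, two_smul]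
        calc (a + b') + (a + b') = (a + b') + (a' + b) := by rw [hcase]
          _ = x + x := e1
      exact smul_right_injective E (two_ne_zero) h2
    · have hmem1 : a + b' ∈ A + B := Set.add_mem_add ha hb'
      have hmem2 : a' + b ∈ A + B := Set.add_mem_add ha' hb
      have hseg : x ∈ openSegment ℝ (a + b') (a' + b) := by
        refine ⟨1/2, 1/2, by norm_num, by norm_num, by norm_num, ?_⟩
        have e1 : (a + b') + (a' + b) = (a + b) + (a' + b') := by abel
        rw [hab, hab'] at e1
        rw [← smul_add, e1, smul_add, ← add_smul]
        norm_num
      exact hx.2 hmem1 hmem2 hseg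
  have hbb : b = b' := add_left_cancel (hab.trans key.symm)
  exact ⟨add_right_cancel ((hbb ▸ hab : a + b' = x).trans hab'.symm), hbb⟩

set_option maxHeartbeats 1000000 in
/-- **Ostrowski's theorem.** If `f = g * h` with `f, g, h` nonzero, then the Newton polytope
of `f` is the Minkowski sum of the Newton polytopes of `g` and `h`. -/
theorem stmt5 {F : Type*} [Field F] {n : ℕ} (f g h : MvPolynomial (Fin n) F)
    (hf : f ≠ 0) (hg : g ≠ 0) (hh : h ≠ 0) (hfgh : f = g * h) :
    newtonPolytope f = newtonPolytope g + newtonPolytope h := by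
  classical
  have hφ : (fun m : Fin n →₀ ℕ => fun i : Fin n => (m i : ℝ)) = ⇑(expMap n) := rfl
  set Sg : Set (Fin n → ℝ) := (expMap n) '' (g.support : Set (Fin n →₀ ℕ)) with hSg
  set Sh : Set (Fin n → ℝ) := (expMap n) '' (h.support : Set (Fin n →₀ ℕ)) with hSh
  set Sf : Set (Fin n → ℝ) := (expMap n) '' (f.support : Set (Fin n →₀ ℕ)) with hSf
  have hNg : newtonPolytope g = convexHull ℝ Sg := by rw [newtonPolytope, hφ]
  have hNh : newtonPolytope h = convexHull ℝ Sh := by rw [newtonPolytope, hφ]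
  have hNf : newtonPolytope f = convexHull ℝ Sf := by rw [newtonPolytope, hφ]
  have hsum : newtonPolytope g + newtonPolytope h = convexHull ℝ (Sg + Sh) := by
    rw [hNg, hNh, convexHull_add]
  -- ⊆ direction
  have hsub : Sf ⊆ Sg + Sh := by
    rw [hSf, hSg, hSh, ← Set.image_add]
    apply Set.image_mono
    rw [hfgh]
    intro m hm
    rw [← Finset.coe_add]
    exact MvPolynomial.support_mul g h hm
  -- ⊇ direction : extreme points of convexHull (Sg + Sh) lie in Sf
  have hext : (convexHull ℝ (Sg + Sh)).extremePoints ℝ ⊆ Sf := by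
    intro x hx
    have hxmem : x ∈ Sg + Sh := extremePoints_convexHull_subset hx
    obtain ⟨xa, hxa, xb, hxb, hxab⟩ := hxmem
    obtain ⟨m1, hm1, rfl⟩ := hxa
    obtain ⟨m2, hm2, rfl⟩ := hxb
    have hxab' : expMap n m1 + expMap n m2 = x := hxab
    -- x is an extreme point of (convexHull Sg) + (convexHull Sh)
    have hx' : x ∈ ((convexHull ℝ Sg) + (convexHull ℝ Sh)).extremePoints ℝ := by
      rwa [← convexHull_add]
    have hcoeff : MvPolynomial.coeff (m1 + m2) f ≠ 0 := by
      rw [hfgh, MvPolynomial.coeff_mul]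
      have hsingle : ∀ p ∈ Finset.HasAntidiagonal.antidiagonal (m1 + m2), p ≠ (m1, m2) →
          MvPolynomial.coeff p.1 g * MvPolynomial.coeff p.2 h = 0 := by
        rintro ⟨p, q⟩ hpq hne
        by_contra hzero
        have hp : p ∈ g.support := by
          rw [MvPolynomial.mem_support_iff]
          exact fun hp0 => hzero (by rw [hp0]; simp)
        have hq : q ∈ h.support := by
          rw [MvPolynomial.mem_support_iff]
          exact fun hq0 => hzero (by rw [hq0]; simp)
        have hpq' : p + q = m1 + m2 := Finset.HasAntidiagonal.mem_antidiagonal.1 hpq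
        have hmemp : expMap n p ∈ convexHull ℝ Sg :=
          subset_convexHull ℝ Sg ⟨p, hp, rfl⟩
        have hmemq : expMap n q ∈ convexHull ℝ Sh :=
          subset_convexHull ℝ Sh ⟨q, hq, rfl⟩
        have hmem1 : expMap n m1 ∈ convexHull ℝ Sg :=
          subset_convexHull ℝ Sg ⟨m1, hm1, rfl⟩
        have hmem2 : expMap n m2 ∈ convexHull ℝ Sh :=
          subset_convexHull ℝ Sh ⟨m2, hm2, rfl⟩
        have heq : expMap n p + expMap n q = x := by
          rw [← map_add, hpq', map_add, hxab']
        have := extreme_add_unique hx' hmemp hmemq hmem1 hmem2 heq hxab'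
        exact hne (Prod.ext (expMap_injective n this.1) (expMap_injective n this.2))
      have hmemad : (m1, m2) ∈ Finset.HasAntidiagonal.antidiagonal (m1 + m2) := Finset.HasAntidiagonal.mem_antidiagonal.2 rfl
      rw [Finset.sum_eq_single_of_mem (m1, m2) hmemad hsingle]
      exact mul_ne_zero (MvPolynomial.mem_support_iff.1 hm1)
        (MvPolynomial.mem_support_iff.1 hm2)
    refine ⟨m1 + m2, ?_, by rw [map_add, hxab']⟩
    exact MvPolynomial.mem_support_iff.2 hcoeff
  -- assemble via Krein–Milman
  have hfinGH : (Sg + Sh).Finite := by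
    have : (Sg + Sh) = (expMap n) '' ((g.support + h.support : Finset (Fin n →₀ ℕ)) :
        Set (Fin n →₀ ℕ)) := by
      rw [Finset.coe_add, Set.image_add, hSg, hSh]
    rw [this]
    exact (Finset.finite_toSet _).image _
  have hcompact : IsCompact (convexHull ℝ (Sg + Sh)) := hfinGH.isCompact_convexHull (𝕜 := ℝ)
  have hconv : Convex ℝ (convexHull ℝ (Sg + Sh)) := convex_convexHull ℝ _
  have hKM := closure_convexHull_extremePoints hcompact hconv
  have hE_fin : ((convexHull ℝ (Sg + Sh)).extremePoints ℝ).Finite :=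
    hfinGH.subset extremePoints_convexHull_subset
  have hclosed : IsClosed (convexHull ℝ ((convexHull ℝ (Sg + Sh)).extremePoints ℝ)) :=
    hE_fin.isClosed_convexHull (𝕜 := ℝ)
  rw [hclosed.closure_eq] at hKM
  apply Set.Subset.antisymm
  · rw [hNf, hsum]
    exact convexHull_mono hsub
  · rw [hsum, hNf, ← hKM]
    exact convexHull_mono hext
end

section
/- Let F be a field and let f, g, h be nonzero polynomials in F[x_1, ..., x_n] with f = g·h. Then mon(f) ≥ |V(P_f)| ≥ max{|V(P_g)|, |V(P_h)|}, where mon(f) is the sparsity of f and |V(P)| denotes the number of extreme points of a polytope P. -/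
open scoped Pointwise

open Set

section Aux

variable {E : Type*} [NormedAddCommGroup E] [NormedSpace ℝ E]

lemma aux_eq_of_combo {t s X Y M : ℝ} (ht : 0 < t) (hs : 0 < s) (hts : t + s = 1)
    (hX : X ≤ M) (hY : Y ≤ M) (hval : t * X + s * Y = M) : X = M ∧ Y = M := by
  have hM : t * M + s * M = M := by rw [← add_mul, hts, one_mul]
  constructor
  · by_contra hne
    have hlt : X < M := lt_of_le_of_ne hX hne
    have h1 := mul_lt_mul_of_pos_left hlt ht
    have h2 := mul_le_mul_of_nonneg_left hY hs.le
    linarith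
  · by_contra hne
    have hlt : Y < M := lt_of_le_of_ne hY hne
    have h1 := mul_lt_mul_of_pos_left hlt hs
    have h2 := mul_le_mul_of_nonneg_left hX ht.le
    linarith

/-- Uniqueness of the decomposition of an extreme point of a Minkowski sum. -/
lemma aux_unique_decomp {P Q : Set E} {v a b a' b' : E}
    (hv : v ∈ Set.extremePoints ℝ (P + Q))
    (ha : a ∈ P) (hb : b ∈ Q) (ha' : a' ∈ P) (hb' : b' ∈ Q)
    (h1 : a + b = v) (h2 : a' + b' = v) : a = a' ∧ b = b' := by
  have hx : a + b' ∈ P + Q := Set.add_mem_add ha hb'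
  have hy : a' + b ∈ P + Q := Set.add_mem_add ha' hb
  have hsum : (a + b') + (a' + b) = v + v := by
    calc (a + b') + (a' + b) = (a + b) + (a' + b') := by abel
    _ = v + v := by rw [h1, h2]
  have hmem : v ∈ openSegment ℝ (a + b') (a' + b) := by
    refine ⟨1/2, 1/2, by norm_num, by norm_num, by norm_num, ?_⟩
    rw [← smul_add, hsum, smul_add]
    module
  have e1 := hv.2 hx hy hmem
  have hb'b : b' = b := by
    have : a + b' = a + b := e1.trans h1.symm
    exact add_left_cancel this
  subst hb'b
  have : a' + b' = a + b' := h2.trans h1.symm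
  exact ⟨(add_right_cancel this).symm, rfl⟩

/-- Every extreme point of the convex hull of a finite set is exposed. -/
lemma aux_exists_exposing {A : Set E} (hA : A.Finite) {a : E}
    (ha : a ∈ Set.extremePoints ℝ (convexHull ℝ A)) :
    ∃ ℓ : E →L[ℝ] ℝ, ∀ x ∈ convexHull ℝ A, x ≠ a → ℓ x < ℓ a := by
  have haA : a ∈ A := extremePoints_convexHull_subset ha
  by_cases hAe : (A \ {a}).Nonempty
  · set K := convexHull ℝ (A \ {a}) with hK
    have hKsub : K ⊆ convexHull ℝ A := convexHull_mono diff_subset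
    have haK : a ∉ K := by
      intro hmem
      have h1 : a ∈ Set.extremePoints ℝ K :=
        inter_extremePoints_subset_extremePoints_of_subset hKsub ⟨hmem, ha⟩
      have h2 : a ∈ A \ {a} := extremePoints_convexHull_subset h1
      exact h2.2 rfl
    obtain ⟨ℓ, u, hu, hua⟩ := geometric_hahn_banach_closed_point
      (convex_convexHull ℝ _) ((hA.diff).isCompact_convexHull (𝕜 := ℝ).isClosed) haK
    refine ⟨ℓ, fun x hx hxa => ?_⟩
    have hAins : insert a (A \ {a}) = A := by
      rw [insert_diff_singleton]; exact insert_eq_self.2 haA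
    have hxJ : x ∈ convexJoin ℝ {a} K := by
      rw [← hAins] at hx
      rwa [convexHull_insert hAe] at hx
    rw [mem_convexJoin] at hxJ
    obtain ⟨p, hp, q, hq, hseg⟩ := hxJ
    rw [mem_singleton_iff] at hp
    rw [hp] at hseg
    obtain ⟨t, s, ht, hs, hts, heq⟩ := hseg
    have hqa : ℓ q < ℓ a := (hu q hq).trans hua
    have hs0 : 0 < s := by
      rcases lt_or_eq_of_le hs with hlt | hzero
      · exact hlt
      · exfalso; apply hxa
        rw [← heq, ← hzero, zero_smul, add_zero]
        have ht1 : t = 1 := by linarith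
        rw [ht1, one_smul]
    have hlx : ℓ x = t * ℓ a + s * ℓ q := by
      rw [← heq]; simp
    have hprod := mul_lt_mul_of_pos_left hqa hs0
    have hsumA : t * ℓ a + s * ℓ a = ℓ a := by rw [← add_mul, hts, one_mul]
    linarith [hlx, hprod, hsumA]
  · have hA1 : A = {a} := by
      rw [not_nonempty_iff_eq_empty, diff_eq_empty] at hAe
      exact hAe.antisymm (singleton_subset_iff.2 haA)
    refine ⟨0, fun x hx hxa => ?_⟩
    rw [hA1, convexHull_singleton, mem_singleton_iff] at hx
    exact absurd hx hxa

/-- For any extreme point `a` of `conv A`, there is `b ∈ conv B` such that `a + b` is an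
extreme point of the Minkowski sum `conv A + conv B`. -/
lemma aux_exists_partner {A B : Set E} (hA : A.Finite) (hB : B.Finite) (hBne : B.Nonempty)
    {a : E} (ha : a ∈ Set.extremePoints ℝ (convexHull ℝ A)) :
    ∃ b ∈ convexHull ℝ B,
      a + b ∈ Set.extremePoints ℝ (convexHull ℝ A + convexHull ℝ B) := by
  obtain ⟨ℓ, hℓ⟩ := aux_exists_exposing hA ha
  have haP : a ∈ convexHull ℝ A := ha.1
  have hQcomp : IsCompact (convexHull ℝ B) := hB.isCompact_convexHull (𝕜 := ℝ)
  obtain ⟨y₀, hy₀Q, hy₀max⟩ :=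
    hQcomp.exists_isMaxOn (hBne.convexHull) ℓ.continuous.continuousOn
  have hpmax : ∀ p ∈ convexHull ℝ A, ℓ p ≤ ℓ a := by
    intro p hp
    by_cases hpa : p = a
    · rw [hpa]
    · exact (hℓ p hp hpa).le
  have hqmax : ∀ q ∈ convexHull ℝ B, ℓ q ≤ ℓ y₀ := fun q hq => hy₀max hq
  set Fc : Set E := convexHull ℝ B ∩ {y | ℓ y = ℓ y₀} with hFc
  have hFclosed : IsClosed Fc :=
    hQcomp.isClosed.inter (isClosed_eq ℓ.continuous continuous_const)
  have hFcomp : IsCompact Fc := hQcomp.of_isClosed_subset hFclosed inter_subset_left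
  obtain ⟨b, hbF⟩ := hFcomp.extremePoints_nonempty ⟨y₀, hy₀Q, rfl⟩
  have hbQ : b ∈ convexHull ℝ B := hbF.1.1
  have hbl : ℓ b = ℓ y₀ := hbF.1.2
  refine ⟨b, hbQ, ⟨Set.add_mem_add haP hbQ, ?_⟩⟩
  rintro x₁ hx₁ x₂ hx₂ hseg
  obtain ⟨p₁, hp₁, q₁, hq₁, rfl⟩ := hx₁
  obtain ⟨p₂, hp₂, q₂, hq₂, rfl⟩ := hx₂
  obtain ⟨t, s, ht, hs, hts, heq⟩ := hseg
  have hval := congrArg ℓ heq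
  simp only [map_add, map_smul, smul_eq_mul] at hval
  rw [hbl] at hval
  have hb1 : ℓ p₁ ≤ ℓ a := hpmax _ hp₁
  have hb2 : ℓ p₂ ≤ ℓ a := hpmax _ hp₂
  have hc1 : ℓ q₁ ≤ ℓ y₀ := hqmax _ hq₁
  have hc2 : ℓ q₂ ≤ ℓ y₀ := hqmax _ hq₂
  have hval' : t * (ℓ p₁ + ℓ q₁) + s * (ℓ p₂ + ℓ q₂) = ℓ a + ℓ y₀ := by
    linear_combination hval
  obtain ⟨he1, he2⟩ := aux_eq_of_combo ht hs hts
    (add_le_add hb1 hc1) (add_le_add hb2 hc2) hval'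
  have hp₁a : p₁ = a := by
    by_contra hne
    have := hℓ p₁ hp₁ hne
    linarith
  have hp₂a : p₂ = a := by
    by_contra hne
    have := hℓ p₂ hp₂ hne
    linarith
  have hlp₁ : ℓ p₁ = ℓ a := by rw [hp₁a]
  have hlp₂ : ℓ p₂ = ℓ a := by rw [hp₂a]
  have hq₁F : q₁ ∈ Fc := ⟨hq₁, by simp only [mem_setOf_eq]; linarith⟩
  have hq₂F : q₂ ∈ Fc := ⟨hq₂, by simp only [mem_setOf_eq]; linarith⟩
  have hbseg : t • q₁ + s • q₂ = b := by
    have hstep : t • (p₁ + q₁) + s • (p₂ + q₂) = (t + s) • a + (t • q₁ + s • q₂) := by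
      rw [hp₁a, hp₂a]; module
    rw [hstep, hts, one_smul] at heq
    exact add_left_cancel heq
  have hq₁b := hbF.2 hq₁F hq₂F ⟨t, s, ht, hs, hts, hbseg⟩
  exact by rw [hp₁a, hq₁b]

/-- The number of extreme points of a Minkowski sum of two (finite-generated) polytopes is at
least the number of extreme points of either summand. -/
lemma aux_card_le {A B : Set E} (hA : A.Finite) (hB : B.Finite) (hBne : B.Nonempty) :
    (Set.extremePoints ℝ (convexHull ℝ A)).ncard ≤
      (Set.extremePoints ℝ (convexHull ℝ A + convexHull ℝ B)).ncard := by
  classical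
  set V := Set.extremePoints ℝ (convexHull ℝ A) with hV
  set W := Set.extremePoints ℝ (convexHull ℝ A + convexHull ℝ B) with hW
  have hchoice : ∀ a ∈ V, ∃ b, b ∈ convexHull ℝ B ∧ a + b ∈ W := by
    intro a ha
    obtain ⟨b, hb, hext⟩ := aux_exists_partner hA hB hBne ha
    exact ⟨b, hb, hext⟩
  choose! φ hφ1 hφ2 using hchoice
  have hWfin : W.Finite := by
    have h1 : W ⊆ A + B := by
      rw [hW, ← convexHull_add]
      exact extremePoints_convexHull_subset
    exact (hA.add hB).subset h1
  have himg : (fun a => a + φ a) '' V ⊆ W := by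
    rintro _ ⟨a, ha, rfl⟩
    exact hφ2 a ha
  have hinj : Set.InjOn (fun a => a + φ a) V := by
    intro a ha a' ha' heq
    have hv : a + φ a ∈ Set.extremePoints ℝ (convexHull ℝ A + convexHull ℝ B) := hφ2 a ha
    exact (aux_unique_decomp hv ha.1 (hφ1 a ha) ha'.1 (hφ1 a' ha') rfl heq.symm).1
  calc V.ncard = ((fun a => a + φ a) '' V).ncard := (Set.ncard_image_of_injOn hinj).symm
    _ ≤ W.ncard := Set.ncard_le_ncard himg hWfin

end Aux

/-- The embedding of exponent vectors into `ℝⁿ`, as an additive monoid hom. -/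
noncomputable def iotaHom (n : ℕ) : (Fin n →₀ ℕ) →+ (Fin n → ℝ) where
  toFun m := fun i => (m i : ℝ)
  map_zero' := by ext i; simp
  map_add' p q := by ext i; simp

lemma iota_inj (n : ℕ) : Function.Injective (iotaHom n) := by
  intro p q hpq
  ext i
  have h2 : ((p i : ℝ)) = ((q i : ℝ)) := congrFun hpq i
  exact_mod_cast h2

lemma newton_repr {F : Type*} [Field F] {n : ℕ} (p : MvPolynomial (Fin n) F) :
    newtonPolytope p = convexHull ℝ ((iotaHom n) '' (p.support : Set (Fin n →₀ ℕ))) := rfl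

set_option maxHeartbeats 1000000 in
lemma newton_mul {F : Type*} [Field F] {n : ℕ} (g h : MvPolynomial (Fin n) F)
    (hg : g ≠ 0) (hh : h ≠ 0) :
    newtonPolytope (g * h) = newtonPolytope g + newtonPolytope h := by
  classical
  set A : Set (Fin n → ℝ) := (iotaHom n) '' (g.support : Set (Fin n →₀ ℕ)) with hAdef
  set B : Set (Fin n → ℝ) := (iotaHom n) '' (h.support : Set (Fin n →₀ ℕ)) with hBdef
  have hAfin : A.Finite := g.support.finite_toSet.image _
  have hBfin : B.Finite := h.support.finite_toSet.image _
  have hPQ : newtonPolytope g + newtonPolytope h = convexHull ℝ (A + B) := by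
    rw [newton_repr, newton_repr, convexHull_add]
  have hsub1 : newtonPolytope (g * h) ⊆ convexHull ℝ (A + B) := by
    rw [newton_repr]
    apply convexHull_mono
    rintro _ ⟨m, hm, rfl⟩
    have hm' : m ∈ g.support + h.support := MvPolynomial.support_mul g h hm
    rw [Finset.mem_add] at hm'
    obtain ⟨p, hp, q, hq, rfl⟩ := hm'
    rw [map_add]
    exact Set.add_mem_add ⟨p, hp, rfl⟩ ⟨q, hq, rfl⟩
  have hextr : Set.extremePoints ℝ (convexHull ℝ (A + B)) ⊆
      (iotaHom n) '' ((g * h).support : Set (Fin n →₀ ℕ)) := by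
    intro v hv
    have hvAB : v ∈ A + B := extremePoints_convexHull_subset hv
    obtain ⟨x, hx, y, hy, hxy⟩ := hvAB
    obtain ⟨p₀, hp₀, rfl⟩ := hx
    obtain ⟨q₀, hq₀, rfl⟩ := hy
    have hxy' : (iotaHom n) p₀ + (iotaHom n) q₀ = v := hxy
    have hv' : v ∈ Set.extremePoints ℝ (convexHull ℝ A + convexHull ℝ B) := by
      rwa [convexHull_add] at hv
    have hmemA₀ : (iotaHom n) p₀ ∈ convexHull ℝ A :=
      subset_convexHull ℝ A ⟨p₀, hp₀, rfl⟩
    have hmemB₀ : (iotaHom n) q₀ ∈ convexHull ℝ B :=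
      subset_convexHull ℝ B ⟨q₀, hq₀, rfl⟩
    have hcoeff : (g * h).coeff (p₀ + q₀) = g.coeff p₀ * h.coeff q₀ := by
      rw [MvPolynomial.coeff_mul]
      apply Finset.sum_eq_single (p₀, q₀)
      · rintro ⟨p, q⟩ hmem hne
        by_contra hne0
        have hcp : g.coeff p ≠ 0 := left_ne_zero_of_mul hne0
        have hcq : h.coeff q ≠ 0 := right_ne_zero_of_mul hne0
        have hpsup : p ∈ g.support := MvPolynomial.mem_support_iff.2 hcp
        have hqsup : q ∈ h.support := MvPolynomial.mem_support_iff.2 hcq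
        have hpq : p + q = p₀ + q₀ := Finset.HasAntidiagonal.mem_antidiagonal.1 hmem
        have hsum : (iotaHom n) p + (iotaHom n) q = v := by
          rw [← map_add, hpq, map_add, hxy']
        have hmemA : (iotaHom n) p ∈ convexHull ℝ A :=
          subset_convexHull ℝ A ⟨p, hpsup, rfl⟩
        have hmemB : (iotaHom n) q ∈ convexHull ℝ B :=
          subset_convexHull ℝ B ⟨q, hqsup, rfl⟩
        obtain ⟨hep, heq⟩ :=
          aux_unique_decomp hv' hmemA hmemB hmemA₀ hmemB₀ hsum hxy'
        apply hne
        have hp' : p = p₀ := iota_inj n hep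
        have hq' : q = q₀ := iota_inj n heq
        rw [hp', hq']
      · intro habs
        rw [Finset.HasAntidiagonal.mem_antidiagonal] at habs
        exact absurd rfl habs
    have hnz : (g * h).coeff (p₀ + q₀) ≠ 0 := by
      rw [hcoeff]
      exact mul_ne_zero (MvPolynomial.mem_support_iff.1 hp₀)
        (MvPolynomial.mem_support_iff.1 hq₀)
    exact ⟨p₀ + q₀, MvPolynomial.mem_support_iff.2 hnz, by rw [map_add, hxy']⟩
  have hcompact : IsCompact (convexHull ℝ (A + B)) := (hAfin.add hBfin).isCompact_convexHull (𝕜 := ℝ)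
  have hsub2 : convexHull ℝ (A + B) ⊆ newtonPolytope (g * h) := by
    have hKM := closure_convexHull_extremePoints hcompact (convex_convexHull ℝ _)
    rw [← hKM]
    have hch : convexHull ℝ (Set.extremePoints ℝ (convexHull ℝ (A + B))) ⊆
        newtonPolytope (g * h) := by
      rw [newton_repr]
      exact convexHull_min (hextr.trans (subset_convexHull ℝ _)) (convex_convexHull ℝ _)
    exact closure_minimal hch
      ((((g * h).support.finite_toSet.image _).isCompact_convexHull (𝕜 := ℝ)).isClosed)
  rw [hPQ]
  exact hsub1.antisymm hsub2

/-- If `f = g * h` with `f, g, h` nonzero, then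
`mon(f) ≥ |V(P_f)| ≥ max {|V(P_g)|, |V(P_h)|}`, where `mon(f)` is the sparsity of `f` and
`V(P)` is the set of extreme points (vertices) of the polytope `P`. -/
theorem stmt6 {F : Type*} [Field F] {n : ℕ} (f g h : MvPolynomial (Fin n) F)
    (hf : f ≠ 0) (hg : g ≠ 0) (hh : h ≠ 0) (hfgh : f = g * h) :
    max ((Set.extremePoints ℝ (newtonPolytope g)).ncard)
        ((Set.extremePoints ℝ (newtonPolytope h)).ncard) ≤
      (Set.extremePoints ℝ (newtonPolytope f)).ncard ∧
    (Set.extremePoints ℝ (newtonPolytope f)).ncard ≤ f.support.card := by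
  classical
  have hmul : newtonPolytope f = newtonPolytope g + newtonPolytope h := by
    rw [hfgh]
    exact newton_mul g h hg hh
  have hgfin : ((iotaHom n) '' (g.support : Set (Fin n →₀ ℕ))).Finite :=
    g.support.finite_toSet.image _
  have hhfin : ((iotaHom n) '' (h.support : Set (Fin n →₀ ℕ))).Finite :=
    h.support.finite_toSet.image _
  have hgne : ((iotaHom n) '' (g.support : Set (Fin n →₀ ℕ))).Nonempty := by
    apply Set.Nonempty.image
    exact_mod_cast MvPolynomial.support_nonempty.2 hg
  have hhne : ((iotaHom n) '' (h.support : Set (Fin n →₀ ℕ))).Nonempty := by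
    apply Set.Nonempty.image
    exact_mod_cast MvPolynomial.support_nonempty.2 hh
  constructor
  · apply max_le
    · rw [hmul, newton_repr g, newton_repr h]
      exact aux_card_le hgfin hhfin hhne
    · rw [hmul, newton_repr g, newton_repr h, add_comm (convexHull ℝ _)]
      exact aux_card_le hhfin hgfin hgne
  · have hsub : Set.extremePoints ℝ (newtonPolytope f) ⊆
        (iotaHom n) '' (f.support : Set (Fin n →₀ ℕ)) := by
      rw [newton_repr f]
      exact extremePoints_convexHull_subset
    calc (Set.extremePoints ℝ (newtonPolytope f)).ncard
        ≤ ((iotaHom n) '' (f.support : Set (Fin n →₀ ℕ))).ncard :=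
          Set.ncard_le_ncard hsub (f.support.finite_toSet.image _)
      _ ≤ (f.support : Set (Fin n →₀ ℕ)).ncard :=
          Set.ncard_image_le f.support.finite_toSet
      _ = f.support.card := Set.ncard_coe_finset _
end

section
/- Let F be a field and let g ∈ F[x_1, ..., x_n] be a multilinear polynomial, i.e., the individual degree of every variable in g is at most 1. If f = g·h for some polynomial h ∈ F[x_1, ..., x_n] and f ≠ 0, then mon(f) ≥ mon(g). -/
open Polynomial MvPolynomial Finsupp in
/-- single coefficient sparsity bound -/
private lemma coeff_card_le {F : Type*} [CommRing F] {n : ℕ}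
    (f : MvPolynomial (Fin (n + 1)) F) (a : ℕ) :
    ((MvPolynomial.finSuccEquiv F n f).coeff a).support.card ≤ f.support.card := by
  calc ((MvPolynomial.finSuccEquiv F n f).coeff a).support.card
      = (((MvPolynomial.finSuccEquiv F n f).coeff a).support.image (Finsupp.cons a)).card :=
        (Finset.card_image_of_injective _ (Finsupp.cons_right_injective a)).symm
    _ ≤ f.support.card := by
        rw [MvPolynomial.image_support_finSuccEquiv]
        exact Finset.card_le_card (Finset.filter_subset _ _)

open Polynomial MvPolynomial Finsupp in
/-- two-coefficient sparsity bound -/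
private lemma two_coeff_card_le {F : Type*} [CommRing F] {n : ℕ}
    (f : MvPolynomial (Fin (n + 1)) F) {a b : ℕ} (hab : a ≠ b) :
    ((MvPolynomial.finSuccEquiv F n f).coeff a).support.card
      + ((MvPolynomial.finSuccEquiv F n f).coeff b).support.card ≤ f.support.card := by
  set A := ((MvPolynomial.finSuccEquiv F n f).coeff a).support.image (Finsupp.cons a) with hA
  set B := ((MvPolynomial.finSuccEquiv F n f).coeff b).support.image (Finsupp.cons b) with hB
  have hAeq : A = {m ∈ f.support | m 0 = a} := MvPolynomial.image_support_finSuccEquiv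
  have hBeq : B = {m ∈ f.support | m 0 = b} := MvPolynomial.image_support_finSuccEquiv
  have hdisj : Disjoint A B := by
    rw [hAeq, hBeq, Finset.disjoint_filter]
    intro m _ hm0 hmb
    exact hab (hm0 ▸ hmb.symm ▸ rfl)
  have hcardA : A.card = ((MvPolynomial.finSuccEquiv F n f).coeff a).support.card :=
    Finset.card_image_of_injective _ (Finsupp.cons_right_injective a)
  have hcardB : B.card = ((MvPolynomial.finSuccEquiv F n f).coeff b).support.card :=
    Finset.card_image_of_injective _ (Finsupp.cons_right_injective b)
  calc ((MvPolynomial.finSuccEquiv F n f).coeff a).support.card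
        + ((MvPolynomial.finSuccEquiv F n f).coeff b).support.card
      = A.card + B.card := by rw [hcardA, hcardB]
    _ = (A ∪ B).card := (Finset.card_union_of_disjoint hdisj).symm
    _ ≤ f.support.card := by
        refine Finset.card_le_card ?_
        rw [hAeq, hBeq]
        exact Finset.union_subset (Finset.filter_subset _ _) (Finset.filter_subset _ _)

open Polynomial MvPolynomial Finsupp in
/-- sparsity of a multilinear (in var 0) polynomial is bounded by the sum of sparsities of
its two coefficients under `finSuccEquiv`. -/
private lemma card_le_coeff_card {F : Type*} [CommRing F] {n : ℕ}
    (g : MvPolynomial (Fin (n + 1)) F) (h0 : g.degreeOf 0 ≤ 1) :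
    g.support.card ≤ ((MvPolynomial.finSuccEquiv F n g).coeff 0).support.card
      + ((MvPolynomial.finSuccEquiv F n g).coeff 1).support.card := by
  set A := ((MvPolynomial.finSuccEquiv F n g).coeff 0).support.image (Finsupp.cons 0) with hA
  set B := ((MvPolynomial.finSuccEquiv F n g).coeff 1).support.image (Finsupp.cons 1) with hB
  have hsub : g.support ⊆ A ∪ B := by
    intro m hm
    have hm0 : m 0 ≤ 1 := by
      refine le_trans ?_ h0
      rw [MvPolynomial.degreeOf_eq_sup]
      exact Finset.le_sup (f := fun m => m 0) hm
    have hmem : Finsupp.tail m ∈ ((MvPolynomial.finSuccEquiv F n g).coeff (m 0)).support := by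
      rw [MvPolynomial.mem_support_coeff_finSuccEquiv, Finsupp.cons_tail]
      exact hm
    interval_cases h : m 0
    · refine Finset.mem_union_left _ (Finset.mem_image.mpr ⟨Finsupp.tail m, hmem, ?_⟩)
      have hct := Finsupp.cons_tail m
      rwa [h] at hct
    · refine Finset.mem_union_right _ (Finset.mem_image.mpr ⟨Finsupp.tail m, hmem, ?_⟩)
      have hct := Finsupp.cons_tail m
      rwa [h] at hct
  calc g.support.card ≤ (A ∪ B).card := Finset.card_le_card hsub
    _ ≤ A.card + B.card := Finset.card_union_le _ _
    _ ≤ _ := by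
        rw [hA, hB, Finset.card_image_of_injective _ (Finsupp.cons_right_injective 0),
          Finset.card_image_of_injective _ (Finsupp.cons_right_injective 1)]

open Polynomial MvPolynomial in
private lemma aux_sparsity {F : Type*} [Field F] :
    ∀ (n : ℕ) (g h : MvPolynomial (Fin n) F), (∀ i : Fin n, g.degreeOf i ≤ 1) →
      g ≠ 0 → h ≠ 0 → g.support.card ≤ (g * h).support.card := by
  intro n
  induction n with
  | zero =>
    intro g h _ hg hh
    have h1 : g.support.card ≤ 1 :=
      Finset.card_le_one.mpr fun a _ b _ => Subsingleton.elim a b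
    have h2 : 1 ≤ (g * h).support.card := by
      refine Finset.card_pos.mpr ?_
      rw [Finset.nonempty_iff_ne_empty, ne_eq, MvPolynomial.support_eq_empty]
      exact mul_ne_zero hg hh
    omega
  | succ n ih =>
    intro g h hml hg hh
    set G := MvPolynomial.finSuccEquiv F n g with hGdef
    set H := MvPolynomial.finSuccEquiv F n h with hHdef
    have hG0 : G ≠ 0 := by simpa [hGdef] using hg
    have hH0 : H ≠ 0 := by simpa [hHdef] using hh
    have hndG : G.natDegree ≤ 1 := by
      rw [hGdef, MvPolynomial.natDegree_finSuccEquiv]; exact hml 0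
    have hmulG : MvPolynomial.finSuccEquiv F n (g * h) = G * H := map_mul _ _ _
    -- IH in convenient form
    have key : ∀ p q : ℕ, H.coeff q ≠ 0 →
        (G.coeff p).support.card ≤ (G.coeff p * H.coeff q).support.card := by
      intro p q hq
      by_cases hp : G.coeff p = 0
      · simp [hp]
      · refine ih (G.coeff p) (H.coeff q) (fun j => ?_) hp hq
        exact le_trans (MvPolynomial.degreeOf_coeff_finSuccEquiv g j p) (hml j.succ)
    obtain ⟨c1, c0, hGeq⟩ : ∃ a b, G = Polynomial.C a * Polynomial.X + Polynomial.C b :=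
      Polynomial.exists_eq_X_add_C_of_natDegree_le_one hndG
    have hc0 : G.coeff 0 = c0 := by rw [hGeq]; simp
    have hc1 : G.coeff 1 = c1 := by rw [hGeq]; simp
    have hcard : g.support.card ≤ c0.support.card + c1.support.card := by
      have := card_le_coeff_card g (hml 0)
      rwa [← hGdef, hc0, hc1] at this
    clear_value G H
    have hHnd : H.coeff H.natDegree ≠ 0 :=
      fun hc => hH0 (Polynomial.leadingCoeff_eq_zero.mp hc)
    by_cases hg1 : c1 = 0
    · -- G = C c0
      have hco : (G * H).coeff H.natDegree = c0 * H.coeff H.natDegree := by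
        rw [hGeq, hg1]
        simp [Polynomial.coeff_C_mul]
      calc g.support.card ≤ c0.support.card := by
            have : c1.support.card = 0 := by rw [hg1]; simp
            omega
        _ = (G.coeff 0).support.card := by rw [hc0]
        _ ≤ (G.coeff 0 * H.coeff H.natDegree).support.card := key 0 H.natDegree hHnd
        _ = ((MvPolynomial.finSuccEquiv F n (g * h)).coeff H.natDegree).support.card := by
            rw [hmulG, hco, hc0]
        _ ≤ (g * h).support.card := coeff_card_le (g * h) H.natDegree
    · by_cases hg0 : c0 = 0
      · -- G = C c1 * X
        have hco : (G * H).coeff (H.natDegree + 1) = c1 * H.coeff H.natDegree := by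
          rw [hGeq, hg0]
          simp [mul_assoc, Polynomial.coeff_C_mul, Polynomial.coeff_X_mul]
        calc g.support.card ≤ c1.support.card := by
              have : c0.support.card = 0 := by rw [hg0]; simp
              omega
          _ = (G.coeff 1).support.card := by rw [hc1]
          _ ≤ (G.coeff 1 * H.coeff H.natDegree).support.card := key 1 H.natDegree hHnd
          _ = ((MvPolynomial.finSuccEquiv F n (g * h)).coeff (H.natDegree + 1)).support.card := by
              rw [hmulG, hco, hc1]
          _ ≤ (g * h).support.card := coeff_card_le (g * h) (H.natDegree + 1)
      · -- both coefficients nonzero: use trailing and leading indices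
        set t := H.natTrailingDegree with ht
        have htd : t ≤ H.natDegree := Polynomial.natTrailingDegree_le_natDegree H
        have hXH : (Polynomial.X * H).coeff t = 0 := by
          refine Polynomial.coeff_eq_zero_of_lt_natTrailingDegree ?_
          rw [Polynomial.natTrailingDegree_mul (Polynomial.X_ne_zero) hH0,
            Polynomial.natTrailingDegree_X]
          omega
        have hcot : (G * H).coeff t = c0 * H.coeff t := by
          rw [hGeq, add_mul, Polynomial.coeff_add, mul_assoc, Polynomial.coeff_C_mul, hXH,
            Polynomial.coeff_C_mul]
          ring
        have hcod : (G * H).coeff (H.natDegree + 1) = c1 * H.coeff H.natDegree := by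
          rw [hGeq, add_mul, Polynomial.coeff_add, mul_assoc, Polynomial.coeff_C_mul,
            Polynomial.coeff_X_mul, Polynomial.coeff_C_mul,
            Polynomial.coeff_eq_zero_of_natDegree_lt (by omega : H.natDegree < H.natDegree + 1)]
          ring
        have hHt : H.coeff t ≠ 0 := Polynomial.coeff_natTrailingDegree_ne_zero.mpr hH0
        calc g.support.card
            ≤ c0.support.card + c1.support.card := hcard
          _ = (G.coeff 0).support.card + (G.coeff 1).support.card := by rw [hc0, hc1]
          _ ≤ (G.coeff 0 * H.coeff t).support.card
              + (G.coeff 1 * H.coeff H.natDegree).support.card :=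
              Nat.add_le_add (key 0 t hHt) (key 1 H.natDegree hHnd)
          _ = ((MvPolynomial.finSuccEquiv F n (g * h)).coeff t).support.card
              + ((MvPolynomial.finSuccEquiv F n (g * h)).coeff (H.natDegree + 1)).support.card := by
              rw [hmulG, hcot, hcod, hc0, hc1]
          _ ≤ (g * h).support.card := two_coeff_card_le (g * h) (by omega)

/-- **Sparsity bound for multilinear factors.** If `g ∈ F[x_1, ..., x_n]` is multilinear
(every variable has individual degree at most `1` in `g`) and `f = g * h` is nonzero, then
`mon(f) ≥ mon(g)`. -/
theorem stmt7 {F : Type*} [Field F] {n : ℕ} (f g h : MvPolynomial (Fin n) F)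
    (hml : ∀ i : Fin n, g.degreeOf i ≤ 1) (hfgh : f = g * h) (hf : f ≠ 0) :
    g.support.card ≤ f.support.card := by
  subst hfgh
  have hg : g ≠ 0 := fun hg => hf (by rw [hg, zero_mul])
  have hh : h ≠ 0 := fun hh => hf (by rw [hh, mul_zero])
  exact aux_sparsity n g h hml hg hh
end
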